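/- arXiv:2312.06906 — 5 statements merged into one kernel-verified Lean document; each statement's English description precedes it below -/
import Mathlib

section
/- Let m ≥ 2 and let u ≠ v be indices in {1,…,m}. Then u and v are strongly cospectral with respect to L if and only if either (a) u and v are strongly cospectral with respect to L_X and m ∉ σ_{uv}^−(L_X), or (b) m = 2 and L_X = 0 (i.e., X = O₂). -/
open Matrix Complex

/-- Transition matrix `exp(itM)` of the continuous quantum walk whose Hamiltonian is the
real symmetric matrix `M` (the matrix exponential is taken over `ℂ`). -/
noncomputable def transU {N : Type*} [Fintype N] [DecidableEq N]
    (M : Matrix N N ℝ) (t : ℝ) : Matrix N N ℂ :=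
  NormedSpace.exp ((Complex.I * (t : ℂ)) • M.map (fun x : ℝ => (x : ℂ)))

/-- Laplacian matrix of the join `X ∨ Y` of two weighted graphs with Laplacian
matrices `LX` and `LY`. -/
noncomputable def joinL (m n : ℕ) (LX : Matrix (Fin m) (Fin m) ℝ)
    (LY : Matrix (Fin n) (Fin n) ℝ) :
    Matrix (Fin m ⊕ Fin n) (Fin m ⊕ Fin n) ℝ :=
  Matrix.fromBlocks (LX + (n : ℝ) • (1 : Matrix (Fin m) (Fin m) ℝ))
    (-(Matrix.of fun _ _ => (1 : ℝ)))
    (-(Matrix.of fun _ _ => (1 : ℝ)))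
    (LY + (m : ℝ) • (1 : Matrix (Fin n) (Fin n) ℝ))

/-- Adjacency matrix of the join `X ∨ Y` of two weighted graphs with adjacency
matrices `AX` and `AY`. -/
noncomputable def joinA (m n : ℕ) (AX : Matrix (Fin m) (Fin m) ℝ)
    (AY : Matrix (Fin n) (Fin n) ℝ) :
    Matrix (Fin m ⊕ Fin n) (Fin m ⊕ Fin n) ℝ :=
  Matrix.fromBlocks AX (Matrix.of fun _ _ => (1 : ℝ))
    (Matrix.of fun _ _ => (1 : ℝ)) AY

/-- `lam` is an eigenvalue of the matrix `M`. -/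
def IsEigenvalue {N : Type*} [Fintype N] (M : Matrix N N ℝ) (lam : ℝ) : Prop :=
  ∃ w : N → ℝ, w ≠ 0 ∧ M.mulVec w = lam • w

/-- The eigenvalue support `σ_u(M)` of the vertex `u`: all eigenvalues `lam` of `M` having
an eigenvector `w` with `w u ≠ 0`. -/
def eigSupport {N : Type*} [Fintype N] (M : Matrix N N ℝ) (u : N) : Set ℝ :=
  {lam | ∃ w : N → ℝ, w ≠ 0 ∧ M.mulVec w = lam • w ∧ w u ≠ 0}

/-- Vertices `u` and `v` are strongly cospectral with respect to `M`: for each eigenvalue,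
either all eigenvectors have equal `u`,`v` entries, or all have opposite `u`,`v` entries. -/
def StronglyCospectral {N : Type*} [Fintype N] (M : Matrix N N ℝ) (u v : N) : Prop :=
  ∀ lam : ℝ, IsEigenvalue M lam →
    (∀ w : N → ℝ, M.mulVec w = lam • w → w u = w v) ∨
    (∀ w : N → ℝ, M.mulVec w = lam • w → w u = -(w v))

/-- `σ_{uv}^-(M)`: eigenvalues in the support of `u` all of whose eigenvectors `w`
satisfy `w u = - w v`. -/
def sigmaMinus {N : Type*} [Fintype N] (M : Matrix N N ℝ) (u v : N) : Set ℝ :=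
  {lam | lam ∈ eigSupport M u ∧ ∀ w : N → ℝ, M.mulVec w = lam • w → w u = -(w v)}

/-- The vertex `u` is periodic with respect to `M`. -/
noncomputable def PeriodicAt {N : Type*} [Fintype N] [DecidableEq N]
    (M : Matrix N N ℝ) (u : N) : Prop :=
  ∃ τ : ℝ, 0 < τ ∧ ‖transU M τ u u‖ = 1

/-- Perfect state transfer occurs between vertices `u` and `v` with respect to `M`. -/
noncomputable def HasPST {N : Type*} [Fintype N] [DecidableEq N]
    (M : Matrix N N ℝ) (u v : N) : Prop :=
  ∃ τ : ℝ, 0 < τ ∧ ‖transU M τ u v‖ = 1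
set_option linter.unusedSectionVars false
set_option linter.unusedVariables false
set_option maxHeartbeats 1000000

namespace Stmt10Aux

variable {N : Type*} [Fintype N] [DecidableEq N]

/-- column sums of a symmetric zero-row-sum matrix kill all mulVecs. -/
lemma sum_mulVec_eq_zero (M : Matrix N N ℝ) (hs : M.IsSymm) (hr : ∀ i, ∑ j, M i j = 0)
    (x : N → ℝ) : ∑ i, M.mulVec x i = 0 := by
  simp only [Matrix.mulVec, dotProduct]
  rw [Finset.sum_comm]
  refine Finset.sum_eq_zero fun j _ => ?_
  rw [← Finset.sum_mul]
  have : ∑ i, M i j = 0 := by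
    have := hr j
    rw [← this]
    exact Finset.sum_congr rfl fun i _ => hs.apply i j ▸ rfl
  rw [this, zero_mul]

lemma sum_eigvec_zero (M : Matrix N N ℝ) (hs : M.IsSymm) (hr : ∀ i, ∑ j, M i j = 0)
    {lam : ℝ} (hl : lam ≠ 0) {x : N → ℝ} (hx : M.mulVec x = lam • x) :
    ∑ i, x i = 0 := by
  have h := sum_mulVec_eq_zero M hs hr x
  rw [hx] at h
  simp only [Pi.smul_apply, smul_eq_mul, ← Finset.mul_sum] at h
  exact (mul_eq_zero.mp h).resolve_left hl

lemma eig_orth (M : Matrix N N ℝ) (hs : M.IsSymm) {a b : ℝ} {x y : N → ℝ}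
    (hx : M.mulVec x = a • x) (hy : M.mulVec y = b • y) (hab : a ≠ b) :
    ∑ i, x i * y i = 0 := by
  have key : a * ∑ i, x i * y i = b * ∑ i, x i * y i := by
    have h1 : ∑ i, M.mulVec x i * y i = a * ∑ i, x i * y i := by
      rw [hx]; simp only [Pi.smul_apply, smul_eq_mul, Finset.mul_sum, mul_assoc]
    have h2 : ∑ i, x i * M.mulVec y i = b * ∑ i, x i * y i := by
      rw [hy]; simp only [Pi.smul_apply, smul_eq_mul, Finset.mul_sum]
      exact Finset.sum_congr rfl fun i _ => by ring
    rw [← h1, ← h2]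
    simp only [Matrix.mulVec, dotProduct, Finset.sum_mul, Finset.mul_sum]
    rw [Finset.sum_comm]
    refine Finset.sum_congr rfl fun i _ => Finset.sum_congr rfl fun j _ => ?_
    rw [hs.apply j i]; ring
  by_contra h
  exact hab (mul_right_cancel₀ h key)

/-- kernel vectors of a Laplacian are constant across nonzero entries. -/
lemma ker_step (M : Matrix N N ℝ) (hs : M.IsSymm) (hr : ∀ i, ∑ j, M i j = 0)
    (ho : ∀ i j, i ≠ j → M i j ≤ 0) {z : N → ℝ} (hz : M.mulVec z = 0)
    {i j : N} (hij : M i j ≠ 0) : z i = z j := by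
  rcases eq_or_ne i j with rfl | hne
  · rfl
  have colsum : ∀ q, ∑ p, M p q = 0 := by
    intro q
    rw [← hr q]
    exact Finset.sum_congr rfl fun p _ => hs.apply p q ▸ rfl
  have hterm : ∀ p q, 0 ≤ -(M p q) * (z p - z q) ^ 2 := by
    intro p q
    rcases eq_or_ne p q with rfl | h
    · simp
    · exact mul_nonneg (by linarith [ho p q h]) (sq_nonneg _)
  have hQ : ∑ p, ∑ q, -(M p q) * (z p - z q) ^ 2 = 0 := by
    have expand : ∀ p q : N, -(M p q) * (z p - z q) ^ 2
        = -(M p q * z p ^ 2) - M p q * z q ^ 2 + 2 * (M p q * (z p * z q)) := by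
      intro p q; ring
    simp only [expand, Finset.sum_add_distrib, Finset.sum_sub_distrib]
    have e1 : ∑ p, ∑ q, -(M p q * z p ^ 2) = 0 := by
      refine Finset.sum_eq_zero fun p _ => ?_
      have : ∑ q, -(M p q * z p ^ 2) = -((∑ q, M p q) * z p ^ 2) := by
        rw [Finset.sum_mul, ← Finset.sum_neg_distrib]
      rw [this, hr p, zero_mul, neg_zero]
    have e2 : ∑ p, ∑ q, M p q * z q ^ 2 = 0 := by
      rw [Finset.sum_comm]
      refine Finset.sum_eq_zero fun q _ => ?_
      rw [← Finset.sum_mul, colsum q, zero_mul]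
    have e3 : ∑ p, ∑ q, 2 * (M p q * (z p * z q)) = 0 := by
      refine Finset.sum_eq_zero fun p _ => ?_
      have : ∑ q, 2 * (M p q * (z p * z q)) = 2 * (z p * M.mulVec z p) := by
        rw [Matrix.mulVec, dotProduct, Finset.mul_sum, Finset.mul_sum]
        exact Finset.sum_congr rfl fun q _ => by ring
      rw [this, hz]; simp
    rw [e1, e2, e3]; ring
  have hall : ∀ p ∈ Finset.univ (α := N), ∀ q ∈ Finset.univ (α := N),
      -(M p q) * (z p - z q) ^ 2 = 0 := by
    intro p _ q _
    have h1 : ∀ p ∈ Finset.univ (α := N), 0 ≤ ∑ q, -(M p q) * (z p - z q) ^ 2 :=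
      fun p _ => Finset.sum_nonneg fun q _ => hterm p q
    have h2 := (Finset.sum_eq_zero_iff_of_nonneg h1).mp hQ p (Finset.mem_univ p)
    exact (Finset.sum_eq_zero_iff_of_nonneg fun q _ => hterm p q).mp h2 q (Finset.mem_univ q)
  have := hall i (Finset.mem_univ i) j (Finset.mem_univ j)
  have hsq : (z i - z j) ^ 2 = 0 := by
    rcases mul_eq_zero.mp this with h | h
    · exact absurd (neg_eq_zero.mp h) hij
    · exact h
  have := pow_eq_zero_iff (n := 2) (by norm_num) |>.mp hsq
  linarith [this]

lemma isHermitian_of_isSymm (M : Matrix N N ℝ) (hs : M.IsSymm) : M.IsHermitian := by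
  ext i j
  simp only [Matrix.conjTranspose_apply, star_trivial]
  exact hs.apply i j

/-- If every eigenvector of `M` for a nonzero eigenvalue vanishes at `u`,
then the diagonal entry `M u u` is zero. -/
lemma diag_entry_zero (M : Matrix N N ℝ) (hs : M.IsSymm) (u : N)
    (h : ∀ lam : ℝ, lam ≠ 0 → ∀ y : N → ℝ, M.mulVec y = lam • y → y u = 0) :
    M u u = 0 := by
  have hherm : M.IsHermitian := isHermitian_of_isSymm M hs
  set b := hherm.eigenvectorBasis with hb
  set x : EuclideanSpace ℝ N := WithLp.toLp 2 (Pi.single u (1 : ℝ) : N → ℝ) with hxdef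
  have hrepr : ∑ i, b.repr x i • b i = x := b.sum_repr x
  have hMx : M.mulVec (x : N → ℝ) = ∑ i, b.repr x i • (hherm.eigenvalues i • (b i : N → ℝ)) := by
    conv_lhs => rw [← hrepr]
    have : M.mulVec ((∑ i, b.repr x i • (b i : EuclideanSpace ℝ N) : EuclideanSpace ℝ N) : N → ℝ)
        = ∑ i, b.repr x i • M.mulVec (b i : N → ℝ) := by
      rw [WithLp.ofLp_sum, Matrix.mulVec_sum]
      exact Finset.sum_congr rfl fun i _ => by simp [Matrix.mulVec_smul]
    rw [this]
    refine Finset.sum_congr rfl fun i _ => ?_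
    rw [show M.mulVec (b i : N → ℝ) = hherm.eigenvalues i • (b i : N → ℝ) from
      hherm.mulVec_eigenvectorBasis i]
  have hval : M.mulVec (x : N → ℝ) u = 0 := by
    rw [hMx]
    rw [Finset.sum_apply]
    refine Finset.sum_eq_zero fun i _ => ?_
    rcases eq_or_ne (hherm.eigenvalues i) 0 with h0 | h0
    · simp [h0]
    · have : (b i : N → ℝ) u = 0 :=
        h _ h0 _ (hherm.mulVec_eigenvectorBasis i)
      simp [Pi.smul_apply, this]
  have : M.mulVec (x : N → ℝ) u = M u u := by
    simp [hxdef, Matrix.mulVec, dotProduct, Pi.single_apply, mul_ite]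
  rw [this] at hval
  exact hval

/-- Reachability through nonzero entries of `M`. -/
def Reaches (M : Matrix N N ℝ) (i j : N) : Prop :=
  Relation.ReflTransGen (fun a b => M a b ≠ 0) i j

lemma ker_const_on_reach (M : Matrix N N ℝ) (hs : M.IsSymm) (hr : ∀ i, ∑ j, M i j = 0)
    (ho : ∀ i j, i ≠ j → M i j ≤ 0) {z : N → ℝ} (hz : M.mulVec z = 0)
    {i j : N} (h : Reaches M i j) : z i = z j := by
  induction h with
  | refl => rfl
  | tail _ hbc ih => exact ih.trans (ker_step M hs hr ho hz hbc)

open Classical in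
/-- Indicator of the reachability component of `u`. -/
noncomputable def chi (M : Matrix N N ℝ) (u : N) : N → ℝ :=
  fun i => if Reaches M u i then 1 else 0

lemma chi_self (M : Matrix N N ℝ) (u : N) : chi M u u = 1 := by
  simp only [chi]
  exact if_pos Relation.ReflTransGen.refl

lemma chi_of_not (M : Matrix N N ℝ) {u i : N} (h : ¬ Reaches M u i) : chi M u i = 0 := by
  simp [chi, h]

lemma mulVec_chi (M : Matrix N N ℝ) (hs : M.IsSymm) (hr : ∀ i, ∑ j, M i j = 0)
    (u : N) : M.mulVec (chi M u) = 0 := by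
  classical
  funext i
  show ∑ j, M i j * chi M u j = (0 : ℝ)
  by_cases hi : Reaches M u i
  · have : ∀ j, M i j * chi M u j = M i j := by
      intro j
      by_cases hj : Reaches M u j
      · simp [chi, hj]
      · have : M i j = 0 := by
          by_contra hne
          exact hj (hi.tail hne)
        simp [this]
    simp only [this]
    exact hr i
  · refine Finset.sum_eq_zero fun j _ => ?_
    by_cases hj : Reaches M u j
    · have : M i j = 0 := by
        by_contra hne
        have : M j i ≠ 0 := by
          intro h0
          have h1 := hs.apply i j
          exact hne (by linarith)
        exact hi (hj.tail this)
      simp [this]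
    · simp [chi, hj]



section Join

variable {m n : ℕ} {LX : Matrix (Fin m) (Fin m) ℝ} {LY : Matrix (Fin n) (Fin n) ℝ}

lemma joinL_mulVec_inl (w : Fin m ⊕ Fin n → ℝ) (i : Fin m) :
    (joinL m n LX LY).mulVec w (Sum.inl i)
      = LX.mulVec (fun k => w (Sum.inl k)) i + (n : ℝ) * w (Sum.inl i)
        - ∑ j, w (Sum.inr j) := by
  simp only [Matrix.mulVec, dotProduct, Fintype.sum_sum_type, joinL,
    Matrix.fromBlocks_apply₁₁, Matrix.fromBlocks_apply₁₂, Matrix.add_apply,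
    Matrix.smul_apply, Matrix.one_apply, smul_eq_mul, mul_ite, mul_one, mul_zero,
    Matrix.neg_apply, Matrix.of_apply, neg_mul, one_mul, add_mul]
  simp only [ite_mul, zero_mul]
  rw [Finset.sum_add_distrib, Finset.sum_ite_eq]
  simp only [Finset.mem_univ, if_true, Finset.sum_neg_distrib]
  ring

lemma joinL_mulVec_inr (w : Fin m ⊕ Fin n → ℝ) (j : Fin n) :
    (joinL m n LX LY).mulVec w (Sum.inr j)
      = LY.mulVec (fun k => w (Sum.inr k)) j + (m : ℝ) * w (Sum.inr j)
        - ∑ i, w (Sum.inl i) := by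
  simp only [Matrix.mulVec, dotProduct, Fintype.sum_sum_type, joinL,
    Matrix.fromBlocks_apply₂₁, Matrix.fromBlocks_apply₂₂, Matrix.add_apply,
    Matrix.smul_apply, Matrix.one_apply, smul_eq_mul, mul_ite, mul_one, mul_zero,
    Matrix.neg_apply, Matrix.of_apply, neg_mul, one_mul, add_mul]
  simp only [ite_mul, zero_mul]
  rw [Finset.sum_add_distrib, Finset.sum_ite_eq]
  simp only [Finset.mem_univ, if_true, Finset.sum_neg_distrib]
  ring

lemma joinL_isSymm (hX : LX.IsSymm) (hY : LY.IsSymm) : (joinL m n LX LY).IsSymm := by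
  refine Matrix.IsSymm.fromBlocks (hX.add (Matrix.isSymm_one.smul _)) ?_
    (hY.add (Matrix.isSymm_one.smul _))
  ext i j
  simp [Matrix.transpose_apply]

lemma joinL_rowsum (hXr : ∀ i, ∑ j, LX i j = 0) (hYr : ∀ i, ∑ j, LY i j = 0)
    (p : Fin m ⊕ Fin n) : ∑ q, joinL m n LX LY p q = 0 := by
  cases p with
  | inl i =>
    rw [Fintype.sum_sum_type]
    simp only [joinL, Matrix.fromBlocks_apply₁₁, Matrix.fromBlocks_apply₁₂,
      Matrix.add_apply, Matrix.smul_apply, Matrix.one_apply, smul_eq_mul, mul_ite,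
      mul_one, mul_zero, Matrix.neg_apply, Matrix.of_apply]
    rw [Finset.sum_add_distrib, hXr i, Finset.sum_ite_eq]
    simp
  | inr j =>
    rw [Fintype.sum_sum_type]
    simp only [joinL, Matrix.fromBlocks_apply₂₁, Matrix.fromBlocks_apply₂₂,
      Matrix.add_apply, Matrix.smul_apply, Matrix.one_apply, smul_eq_mul, mul_ite,
      mul_one, mul_zero, Matrix.neg_apply, Matrix.of_apply]
    rw [Finset.sum_add_distrib, hYr j, Finset.sum_ite_eq]
    simp

lemma joinL_offdiag (hXo : ∀ i j, i ≠ j → LX i j ≤ 0) (hYo : ∀ i j, i ≠ j → LY i j ≤ 0)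
    (p q : Fin m ⊕ Fin n) (hpq : p ≠ q) : joinL m n LX LY p q ≤ 0 := by
  cases p with
  | inl i =>
    cases q with
    | inl j =>
      have hij : i ≠ j := fun h => hpq (by rw [h])
      simp only [joinL, Matrix.fromBlocks_apply₁₁, Matrix.add_apply, Matrix.smul_apply,
        Matrix.one_apply, if_neg hij, smul_eq_mul, mul_zero, add_zero]
      exact hXo i j hij
    | inr j => simp [joinL]
  | inr i =>
    cases q with
    | inl j => simp [joinL]
    | inr j =>
      have hij : i ≠ j := fun h => hpq (by rw [h])
      simp only [joinL, Matrix.fromBlocks_apply₂₂, Matrix.add_apply, Matrix.smul_apply,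
        Matrix.one_apply, if_neg hij, smul_eq_mul, mul_zero, add_zero]
      exact hYo i j hij

lemma const_mulVec (hXr : ∀ i, ∑ j, LX i j = 0) (c : ℝ) :
    LX.mulVec (fun _ => c) = 0 := by
  funext i
  show ∑ j, LX i j * c = 0
  rw [← Finset.sum_mul, hXr i, zero_mul]

lemma extend_eig (lam : ℝ) (x : Fin m → ℝ) (hx : LX.mulVec x = lam • x)
    (hsum : ∑ i, x i = 0) :
    (joinL m n LX LY).mulVec (Sum.elim x 0) = (lam + n) • Sum.elim x 0 := by
  funext p
  cases p with
  | inl i =>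
    rw [joinL_mulVec_inl]
    have h1 : (fun k => Sum.elim x (0 : Fin n → ℝ) (Sum.inl k)) = x := rfl
    rw [h1, hx]
    simp only [Sum.elim_inl, Sum.elim_inr, Pi.zero_apply, Pi.smul_apply, smul_eq_mul,
      Finset.sum_const, smul_zero]
    ring
  | inr j =>
    rw [joinL_mulVec_inr]
    have h1 : (fun k => Sum.elim x (0 : Fin n → ℝ) (Sum.inr k)) = (0 : Fin n → ℝ) := rfl
    rw [h1, Matrix.mulVec_zero]
    simp only [Sum.elim_inl, Sum.elim_inr, Pi.zero_apply, Pi.smul_apply, smul_eq_mul,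
      hsum, mul_zero]
    ring

lemma ones_eig (hXr : ∀ i, ∑ j, LX i j = 0) (hYr : ∀ i, ∑ j, LY i j = 0) :
    (joinL m n LX LY).mulVec (fun _ => (1 : ℝ)) = 0 := by
  funext p
  cases p with
  | inl i =>
    rw [joinL_mulVec_inl]
    have h1 : (fun k : Fin m => (1 : ℝ)) = fun _ => (1 : ℝ) := rfl
    rw [show LX.mulVec (fun _ => (1:ℝ)) i = 0 from by rw [const_mulVec hXr]; rfl]
    simp [Finset.sum_const]
  | inr j =>
    rw [joinL_mulVec_inr]
    rw [show LY.mulVec (fun _ => (1:ℝ)) j = 0 from by rw [const_mulVec hYr]; rfl]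
    simp [Finset.sum_const]

lemma special_eig (hXr : ∀ i, ∑ j, LX i j = 0) (hYr : ∀ i, ∑ j, LY i j = 0) :
    (joinL m n LX LY).mulVec (Sum.elim (fun _ => (n : ℝ)) (fun _ => -(m : ℝ)))
      = ((m : ℝ) + n) • Sum.elim (fun _ => (n : ℝ)) (fun _ => -(m : ℝ)) := by
  funext p
  cases p with
  | inl i =>
    rw [joinL_mulVec_inl]
    rw [show LX.mulVec (fun k => Sum.elim (fun _ => (n : ℝ)) (fun _ => -(m : ℝ)) (Sum.inl k)) i
        = 0 from by rw [show (fun k : Fin m => Sum.elim (fun _ => (n : ℝ))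
          (fun _ => -(m : ℝ)) (Sum.inl k)) = fun _ => (n : ℝ) from rfl, const_mulVec hXr]; rfl]
    simp only [Sum.elim_inl, Sum.elim_inr, Finset.sum_const, Finset.card_univ,
      Fintype.card_fin, nsmul_eq_mul, Pi.smul_apply, smul_eq_mul]
    ring
  | inr j =>
    rw [joinL_mulVec_inr]
    rw [show LY.mulVec (fun k => Sum.elim (fun _ => (n : ℝ)) (fun _ => -(m : ℝ)) (Sum.inr k)) j
        = 0 from by rw [show (fun k : Fin n => Sum.elim (fun _ => (n : ℝ))
          (fun _ => -(m : ℝ)) (Sum.inr k)) = fun _ => -(m : ℝ) from rfl, const_mulVec hYr]; rfl]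
    simp only [Sum.elim_inl, Sum.elim_inr, Finset.sum_const, Finset.card_univ,
      Fintype.card_fin, nsmul_eq_mul, Pi.smul_apply, smul_eq_mul]
    ring

lemma sum_parts (hXs : LX.IsSymm) (hXr : ∀ i, ∑ j, LX i j = 0)
    (hYs : LY.IsSymm) (hYr : ∀ i, ∑ j, LY i j = 0)
    (hm : 0 < m) {mu : ℝ} {w : Fin m ⊕ Fin n → ℝ}
    (hw : (joinL m n LX LY).mulVec w = mu • w) (h0 : mu ≠ 0) :
    ∑ i, w (Sum.inl i) + ∑ j, w (Sum.inr j) = 0 := by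
  have hsymm := joinL_isSymm (LX := LX) (LY := LY) hXs hYs
  have hones := ones_eig (LX := LX) (LY := LY) hXr hYr
  have horth := eig_orth (joinL m n LX LY) hsymm hw
    (by rw [hones]; funext p; simp) h0
  rw [Fintype.sum_sum_type] at horth
  simpa using horth

lemma decomp (hXs : LX.IsSymm) (hXr : ∀ i, ∑ j, LX i j = 0)
    (hYs : LY.IsSymm) (hYr : ∀ i, ∑ j, LY i j = 0)
    (hm : 0 < m) (hn : 0 < n) {mu : ℝ} {w : Fin m ⊕ Fin n → ℝ}
    (hw : (joinL m n LX LY).mulVec w = mu • w) (h0 : mu ≠ 0) (hmn : mu ≠ (m : ℝ) + n) :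
    LX.mulVec (fun k => w (Sum.inl k)) = (mu - n) • (fun k => w (Sum.inl k))
      ∧ ∑ i, w (Sum.inl i) = 0 := by
  have hsymm := joinL_isSymm (LX := LX) (LY := LY) hXs hYs
  have h1 := sum_parts hXs hXr hYs hYr hm hw h0
  have horth2 := eig_orth (joinL m n LX LY) hsymm hw
    (special_eig (LX := LX) (LY := LY) hXr hYr) hmn
  rw [Fintype.sum_sum_type] at horth2
  simp only [Sum.elim_inl, Sum.elim_inr, ← Finset.sum_mul] at horth2
  have hmn0 : (0 : ℝ) < (m : ℝ) + n := by positivity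
  have hsx : ∑ i, w (Sum.inl i) = 0 := by
    have : (∑ i, w (Sum.inl i)) * ((m : ℝ) + n) = 0 := by
      have hn' : (0:ℝ) < n := by exact_mod_cast hn
      nlinarith [horth2, h1]
    rcases mul_eq_zero.mp this with h | h
    · exact h
    · exact absurd h (ne_of_gt hmn0)
  have hsy : ∑ j, w (Sum.inr j) = 0 := by linarith
  refine ⟨funext fun i => ?_, hsx⟩
  have := congrFun hw (Sum.inl i)
  rw [joinL_mulVec_inl, hsy] at this
  simp only [Pi.smul_apply, smul_eq_mul] at this ⊢
  linarith

lemma decomp_top (hXs : LX.IsSymm) (hXr : ∀ i, ∑ j, LX i j = 0)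
    (hYs : LY.IsSymm) (hYr : ∀ i, ∑ j, LY i j = 0)
    (hm : 0 < m) {w : Fin m ⊕ Fin n → ℝ}
    (hw : (joinL m n LX LY).mulVec w = ((m : ℝ) + n) • w) :
    LX.mulVec (fun k => w (Sum.inl k) - (∑ i, w (Sum.inl i)) / m)
      = (m : ℝ) • (fun k => w (Sum.inl k) - (∑ i, w (Sum.inl i)) / m) := by
  have hm' : (0:ℝ) < m := by exact_mod_cast hm
  have h1 := sum_parts hXs hXr hYs hYr hm hw (by positivity)
  funext i
  have h2 := congrFun hw (Sum.inl i)
  rw [joinL_mulVec_inl] at h2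
  have h3 : LX.mulVec (fun k => w (Sum.inl k) - (∑ i, w (Sum.inl i)) / m) i
      = LX.mulVec (fun k => w (Sum.inl k)) i - 0 := by
    have : (fun k => w (Sum.inl k) - (∑ i, w (Sum.inl i)) / m)
        = (fun k => w (Sum.inl k)) - (fun _ => (∑ i, w (Sum.inl i)) / m) := rfl
    rw [this, Matrix.mulVec_sub]
    rw [show LX.mulVec (fun _ => (∑ i, w (Sum.inl i)) / m) = 0 from const_mulVec hXr _]
    rfl
  rw [h3]
  simp only [Pi.smul_apply, smul_eq_mul] at h2 ⊢
  have hsy : ∑ j, w (Sum.inr j) = - ∑ i, w (Sum.inl i) := by linarith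
  rw [hsy] at h2
  field_simp
  nlinarith [h2]

end Join

section Hard

variable {m n : ℕ} {LX : Matrix (Fin m) (Fin m) ℝ} {LY : Matrix (Fin n) (Fin n) ℝ}

lemma hard (hm : 2 ≤ m) (hn : 1 ≤ n)
    (hXs : LX.IsSymm) (hXr : ∀ i, ∑ j, LX i j = 0) (hXo : ∀ i j, i ≠ j → LX i j ≤ 0)
    (hYs : LY.IsSymm) (hYr : ∀ i, ∑ j, LY i j = 0)
    {u v : Fin m} (huv : u ≠ v)
    (hSC : StronglyCospectral (joinL m n LX LY) (Sum.inl u) (Sum.inl v))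
    {x0 : Fin m → ℝ} (hx0 : LX.mulVec x0 = 0) (hx0ne : x0 u ≠ x0 v) :
    m = 2 ∧ LX = 0 := by
  classical
  have hm0 : 0 < m := by omega
  have hm' : (0:ℝ) < m := by exact_mod_cast hm0
  have hn' : (0:ℝ) < n := by exact_mod_cast hn
  -- shifted kernel vector with zero sum
  set c0 : ℝ := (∑ i, x0 i) / m with hc0
  set x1 : Fin m → ℝ := fun k => x0 k - c0 with hx1def
  have hx1ker : LX.mulVec x1 = 0 := by
    have h : x1 = x0 - (fun _ => c0) := rfl
    rw [h, Matrix.mulVec_sub, hx0, const_mulVec hXr, sub_zero]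
  have hx1sum : ∑ i, x1 i = 0 := by
    rw [hx1def]
    rw [Finset.sum_sub_distrib, Finset.sum_const, Finset.card_univ, Fintype.card_fin,
      nsmul_eq_mul, hc0]
    field_simp
    ring
  have hx1ne : x1 u ≠ x1 v := by
    intro h
    apply hx0ne
    simp only [hx1def] at h
    linarith
  have hx1eig : LX.mulVec x1 = (0:ℝ) • x1 := by rw [hx1ker]; simp
  have hw1 : (joinL m n LX LY).mulVec (Sum.elim x1 0) = (n:ℝ) • Sum.elim x1 0 := by
    have := extend_eig (LY := LY) 0 x1 hx1eig hx1sum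
    simpa using this
  have hwit1 : Sum.elim x1 (0 : Fin n → ℝ) ≠ 0 := by
    intro h
    apply hx1ne
    have hu := congrFun h (Sum.inl u)
    have hv := congrFun h (Sum.inl v)
    simp only [Sum.elim_inl, Pi.zero_apply] at hu hv
    rw [hu, hv]
  have hEn : IsEigenvalue (joinL m n LX LY) (n:ℝ) := ⟨_, hwit1, hw1⟩
  have hminus : ∀ w, (joinL m n LX LY).mulVec w = (n:ℝ) • w →
      w (Sum.inl u) = -(w (Sum.inl v)) := by
    rcases hSC (n:ℝ) hEn with hplus | hminus
    · exfalso
      have := hplus _ hw1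
      simp only [Sum.elim_inl] at this
      exact hx1ne this
    · exact hminus
  -- (★)
  have star : ∀ z : Fin m → ℝ, LX.mulVec z = 0 → ∑ i, z i = 0 → z u = -(z v) := by
    intro z hz hs
    have hzeig : LX.mulVec z = (0:ℝ) • z := by rw [hz]; simp
    have hwz : (joinL m n LX LY).mulVec (Sum.elim z 0) = (n:ℝ) • Sum.elim z 0 := by
      have := extend_eig (LY := LY) 0 z hzeig hs
      simpa using this
    have := hminus _ hwz
    simpa using this
  -- component indicator of u
  set χ : Fin m → ℝ := chi LX u with hχ
  have hχker : LX.mulVec χ = 0 := mulVec_chi LX hXs hXr u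
  have hvnot : ¬ Reaches LX u v := by
    intro hr
    exact hx0ne (ker_const_on_reach LX hXs hXr hXo hx0 hr)
  have hχu : χ u = 1 := chi_self LX u
  have hχv : χ v = 0 := chi_of_not LX hvnot
  set sA : ℝ := ∑ i, χ i with hsA
  have hshift : χ u - sA / m = -(χ v - sA / m) := by
    have h1 : LX.mulVec (fun k => χ k - sA / m) = 0 := by
      have h : (fun k => χ k - sA / m) = χ - (fun _ => sA / m) := rfl
      rw [h, Matrix.mulVec_sub, hχker, const_mulVec hXr, sub_zero]
    have h2 : ∑ i, (χ i - sA / m) = 0 := by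
      rw [Finset.sum_sub_distrib, Finset.sum_const, Finset.card_univ, Fintype.card_fin,
        nsmul_eq_mul, ← hsA]
      field_simp
      ring
    exact star _ h1 h2
  have hsAm : sA * 2 = m := by
    rw [hχu, hχv] at hshift
    field_simp at hshift
    linarith
  -- (†): eigenvectors for nonzero eigenvalues vanish at u
  have dagger : ∀ lam : ℝ, lam ≠ 0 → ∀ y : Fin m → ℝ, LX.mulVec y = lam • y → y u = 0 := by
    intro lam hlam y hy
    by_contra hyu
    set y' : Fin m → ℝ := fun k => y k * χ k with hy'
    have hy'eig : LX.mulVec y' = lam • y' := by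
      funext i
      show ∑ j, LX i j * y' j = (lam • y') i
      by_cases hi : Reaches LX u i
      · have hstep : ∀ j, LX i j * y' j = LX i j * y j := by
          intro j
          by_cases hj : Reaches LX u j
          · have hcj : χ j = 1 := by simp [hχ, chi, hj]
            simp [hy', hcj]
          · have h0 : LX i j = 0 := by
              by_contra h
              exact hj (hi.tail h)
            simp [h0]
        rw [Finset.sum_congr rfl fun j _ => hstep j]
        have h1 : ∑ j, LX i j * y j = lam * y i := by
          have := congrFun hy i
          simpa [Matrix.mulVec, dotProduct] using this
        have hci : χ i = 1 := by simp [hχ, chi, hi]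
        have h2 : y' i = y i := by simp [hy', hci]
        rw [h1]
        show lam * y i = lam * y' i
        rw [h2]
      · have hstep : ∀ j, LX i j * y' j = 0 := by
          intro j
          by_cases hj : Reaches LX u j
          · have h0 : LX i j = 0 := by
              by_contra h
              have h' : LX j i ≠ 0 := by
                intro hc
                apply h
                rw [← hXs.apply i j]
                exact hc
              exact hi (hj.tail h')
            simp [h0]
          · have hcj : χ j = 0 := chi_of_not LX hj
            simp [hy', hcj]
        rw [Finset.sum_eq_zero fun j _ => hstep j]
        have hci : χ i = 0 := chi_of_not LX hi
        have h2 : y' i = 0 := by simp [hy', hci]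
        show (0:ℝ) = lam * y' i
        rw [h2, mul_zero]
    have hy'u : y' u = y u := by simp [hy', hχu]
    have hy'v : y' v = 0 := by simp [hy', hχv]
    have hy'sum : ∑ i, y' i = 0 := sum_eigvec_zero LX hXs hXr hlam hy'eig
    have hw' := extend_eig (LY := LY) lam y' hy'eig hy'sum
    have hwit : Sum.elim y' (0 : Fin n → ℝ) ≠ 0 := by
      intro h
      apply hyu
      have := congrFun h (Sum.inl u)
      simp only [Sum.elim_inl, Pi.zero_apply] at this
      rw [← hy'u]
      exact this
    have hE : IsEigenvalue (joinL m n LX LY) (lam + n) := ⟨_, hwit, hw'⟩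
    rcases hSC _ hE with hp | hq
    · have := hp _ hw'
      simp only [Sum.elim_inl, hy'u, hy'v] at this
      exact hyu this
    · have := hq _ hw'
      simp only [Sum.elim_inl, hy'u, hy'v, neg_zero] at this
      exact hyu this
  -- row u of LX is zero
  have hdiag : LX u u = 0 := diag_entry_zero LX hXs u dagger
  have hrowu : ∀ j, LX u j = 0 := by
    intro j
    rcases eq_or_ne j u with rfl | hj
    · exact hdiag
    · have h1 : LX u u + ∑ k ∈ Finset.univ.erase u, LX u k = 0 := by
        rw [Finset.add_sum_erase _ _ (Finset.mem_univ u)]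
        exact hXr u
      rw [hdiag, zero_add] at h1
      have h2 : ∀ k ∈ Finset.univ.erase u, LX u k ≤ 0 := by
        intro k hk
        exact hXo u k (Ne.symm (Finset.ne_of_mem_erase hk))
      have h3 := (Finset.sum_eq_zero_iff_of_nonpos h2).mp h1
      exact h3 j (Finset.mem_erase.mpr ⟨hj, Finset.mem_univ j⟩)
  have hsA1 : sA = 1 := by
    rw [hsA]
    rw [Finset.sum_eq_single u (fun b _ hb => ?_) (fun h => absurd (Finset.mem_univ u) h)]
    · exact hχu
    · apply chi_of_not
      intro hr
      rcases hr.cases_head with heq | ⟨c, hc, _⟩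
      · exact hb heq.symm
      · exact hc (hrowu c)
  have hm2 : m = 2 := by
    have : (m:ℝ) = 2 := by rw [← hsAm, hsA1]; ring
    exact_mod_cast this
  refine ⟨hm2, ?_⟩
  have huniv : ∀ i : Fin m, i = u ∨ i = v := by
    intro i
    by_contra hcon
    push_neg at hcon
    have hcard : ({i, u, v} : Finset (Fin m)).card = 3 := by
      rw [Finset.card_insert_of_notMem (by simp [hcon.1, hcon.2]),
        Finset.card_insert_of_notMem (by simp [huv]), Finset.card_singleton]
    have hle : ({i, u, v} : Finset (Fin m)).card ≤ m := by
      have := Finset.card_le_univ ({i, u, v} : Finset (Fin m))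
      simpa using this
    omega
  have huniv2 : ({u, v} : Finset (Fin m)) = Finset.univ := by
    apply Finset.eq_univ_iff_forall.mpr
    intro i
    rcases huniv i with rfl | rfl
    · simp
    · simp
  have hsum_pair : ∀ i : Fin m, LX i u + LX i v = 0 := by
    intro i
    have h := hXr i
    rw [← huniv2, Finset.sum_pair huv] at h
    exact h
  have hvu : LX v u = 0 := by
    rw [hXs.apply u v]
    exact hrowu v
  have hvv : LX v v = 0 := by
    have h := hsum_pair v
    rw [hvu] at h
    linarith
  ext i j
  simp only [Matrix.zero_apply]
  rcases huniv i with rfl | rfl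
  · exact hrowu j
  · rcases huniv j with rfl | rfl
    · exact hvu
    · exact hvv

end Hard

end Stmt10Aux

theorem stmt10 (m n : ℕ) (hm : 2 ≤ m) (hn : 1 ≤ n)
    (LX : Matrix (Fin m) (Fin m) ℝ) (LY : Matrix (Fin n) (Fin n) ℝ)
    (hLXsymm : LX.IsSymm) (hLXrow : ∀ i, ∑ j, LX i j = 0)
    (hLXoffdiag : ∀ i j, i ≠ j → LX i j ≤ 0)
    (hLYsymm : LY.IsSymm) (hLYrow : ∀ i, ∑ j, LY i j = 0)
    (hLYoffdiag : ∀ i j, i ≠ j → LY i j ≤ 0)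
    (u v : Fin m) (huv : u ≠ v) :
    StronglyCospectral (joinL m n LX LY) (Sum.inl u) (Sum.inl v) ↔
      ((StronglyCospectral LX u v ∧ (m : ℝ) ∉ sigmaMinus LX u v) ∨ (m = 2 ∧ LX = 0)) := by
  classical
  have hm0 : 0 < m := by omega
  have hn0 : 0 < n := by omega
  have hm' : (0:ℝ) < m := by exact_mod_cast hm0
  have hn' : (0:ℝ) < n := by exact_mod_cast hn0
  have hLsymm := Stmt10Aux.joinL_isSymm (LX := LX) (LY := LY) hLXsymm hLYsymm
  have hLrow := Stmt10Aux.joinL_rowsum (LX := LX) (LY := LY) hLXrow hLYrow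
  have hLoff := Stmt10Aux.joinL_offdiag (LX := LX) (LY := LY) hLXoffdiag hLYoffdiag
  constructor
  · -- forward direction
    intro hSC
    by_cases hb : ∃ x : Fin m → ℝ, LX.mulVec x = 0 ∧ x u ≠ x v
    · right
      obtain ⟨x0, hx0, hx0ne⟩ := hb
      exact Stmt10Aux.hard hm hn hLXsymm hLXrow hLXoffdiag hLYsymm hLYrow huv hSC hx0 hx0ne
    · left
      push_neg at hb
      constructor
      · -- strong cospectrality for LX
        intro lam hlam
        rcases eq_or_ne lam 0 with rfl | hl0
        · left
          intro x hx
          exact hb x (by rw [hx]; simp)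
        · obtain ⟨x0, hx00, hx0⟩ := hlam
          have hsum0 : ∑ i, x0 i = 0 :=
            Stmt10Aux.sum_eigvec_zero LX hLXsymm hLXrow hl0 hx0
          have hwit : Sum.elim x0 (0 : Fin n → ℝ) ≠ 0 := by
            intro h
            apply hx00
            funext k
            exact congrFun h (Sum.inl k)
          have hEig : IsEigenvalue (joinL m n LX LY) (lam + n) :=
            ⟨_, hwit, Stmt10Aux.extend_eig (LY := LY) lam x0 hx0 hsum0⟩
          rcases hSC (lam + n) hEig with hplus | hminus
          · left
            intro x hx
            have hs : ∑ i, x i = 0 :=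
              Stmt10Aux.sum_eigvec_zero LX hLXsymm hLXrow hl0 hx
            have := hplus _ (Stmt10Aux.extend_eig (LY := LY) lam x hx hs)
            simpa using this
          · right
            intro x hx
            have hs : ∑ i, x i = 0 :=
              Stmt10Aux.sum_eigvec_zero LX hLXsymm hLXrow hl0 hx
            have := hminus _ (Stmt10Aux.extend_eig (LY := LY) lam x hx hs)
            simpa using this
      · -- m not in sigmaMinus
        intro hmem
        obtain ⟨⟨x0, hx00, hx0, hx0u⟩, hall⟩ := hmem
        have hsum0 : ∑ i, x0 i = 0 :=
          Stmt10Aux.sum_eigvec_zero LX hLXsymm hLXrow (ne_of_gt hm') hx0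
        have hW : (joinL m n LX LY).mulVec (Sum.elim x0 0)
            = ((m:ℝ) + n) • Sum.elim x0 0 :=
          Stmt10Aux.extend_eig (LY := LY) (m:ℝ) x0 hx0 hsum0
        have hwit : Sum.elim x0 (0 : Fin n → ℝ) ≠ 0 := by
          intro h
          apply hx00
          funext k
          exact congrFun h (Sum.inl k)
        have hEig : IsEigenvalue (joinL m n LX LY) ((m:ℝ) + n) := ⟨_, hwit, hW⟩
        rcases hSC _ hEig with hplus | hminus
        · have h1 := hplus _ hW
          simp only [Sum.elim_inl] at h1
          have h2 := hall x0 hx0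
          apply hx0u
          linarith
        · have h1 := hminus _ (Stmt10Aux.special_eig (LX := LX) (LY := LY) hLXrow hLYrow)
          simp only [Sum.elim_inl] at h1
          linarith
  · -- backward direction
    intro h
    intro mu hmu
    rcases eq_or_ne mu 0 with rfl | hmu0
    · left
      intro w hw
      have hw0 : (joinL m n LX LY).mulVec w = 0 := by rw [hw]; simp
      set j0 : Fin n := ⟨0, hn0⟩
      have hent : joinL m n LX LY (Sum.inl u) (Sum.inr j0) ≠ 0 := by
        simp [joinL]
      have hent' : joinL m n LX LY (Sum.inl v) (Sum.inr j0) ≠ 0 := by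
        simp [joinL]
      have e1 := Stmt10Aux.ker_step _ hLsymm hLrow hLoff hw0 hent
      have e2 := Stmt10Aux.ker_step _ hLsymm hLrow hLoff hw0 hent'
      rw [e1, e2]
    rcases eq_or_ne mu ((m:ℝ) + n) with rfl | hmutop
    · left
      intro w hw
      have hd := Stmt10Aux.decomp_top hLXsymm hLXrow hLYsymm hLYrow hm0 hw
      set s : ℝ := ∑ i, w (Sum.inl i) with hs
      rcases h with ⟨hSCX, hsig⟩ | ⟨hm2, hLX0⟩
      · by_cases hEm : IsEigenvalue LX (m:ℝ)
        · rcases hSCX (m:ℝ) hEm with hplus | hminusX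
          · have h1 := hplus _ hd
            linarith
          · have hns : (m:ℝ) ∉ eigSupport LX u := fun hsup => hsig ⟨hsup, hminusX⟩
            by_cases hx0 : (fun k => w (Sum.inl k) - s / m) = (0 : Fin m → ℝ)
            · have h1 := congrFun hx0 u
              have h2 := congrFun hx0 v
              simp only [Pi.zero_apply] at h1 h2
              linarith
            · have hu0 : w (Sum.inl u) - s / m = 0 := by
                by_contra hne
                exact hns ⟨_, hx0, hd, hne⟩
              have hv0 := hminusX _ hd
              linarith
        · have hx0 : (fun k => w (Sum.inl k) - s / m) = (0 : Fin m → ℝ) := by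
            by_contra hne
            exact hEm ⟨_, hne, hd⟩
          have h1 := congrFun hx0 u
          have h2 := congrFun hx0 v
          simp only [Pi.zero_apply] at h1 h2
          linarith
      · rw [hLX0] at hd
        have h1 := congrFun hd u
        have h2 := congrFun hd v
        simp only [Matrix.zero_mulVec, Pi.zero_apply, Pi.smul_apply, smul_eq_mul] at h1 h2
        have h1' : w (Sum.inl u) - s / m = 0 := by
          by_contra hne
          have := mul_ne_zero (ne_of_gt hm') hne
          exact this h1.symm
        have h2' : w (Sum.inl v) - s / m = 0 := by
          by_contra hne
          have := mul_ne_zero (ne_of_gt hm') hne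
          exact this h2.symm
        linarith
    · -- generic eigenvalue
      have hdec : ∀ w : Fin m ⊕ Fin n → ℝ, (joinL m n LX LY).mulVec w = mu • w →
          LX.mulVec (fun k => w (Sum.inl k)) = (mu - n) • (fun k => w (Sum.inl k))
            ∧ ∑ i, w (Sum.inl i) = 0 :=
        fun w hw => Stmt10Aux.decomp hLXsymm hLXrow hLYsymm hLYrow hm0 hn0 hw hmu0 hmutop
      rcases h with ⟨hSCX, _⟩ | ⟨hm2, hLX0⟩
      · by_cases hE : IsEigenvalue LX (mu - n)
        · rcases hSCX _ hE with hplus | hminusX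
          · left
            intro w hw
            exact hplus _ (hdec w hw).1
          · right
            intro w hw
            exact hminusX _ (hdec w hw).1
        · left
          intro w hw
          have hx0 : (fun k => w (Sum.inl k)) = (0 : Fin m → ℝ) := by
            by_contra hne
            exact hE ⟨_, hne, (hdec w hw).1⟩
          have h1 := congrFun hx0 u
          have h2 := congrFun hx0 v
          simp only [Pi.zero_apply] at h1 h2
          rw [h1, h2]
      · rcases eq_or_ne mu (n:ℝ) with rfl | hmun
        · right
          intro w hw
          have hsum := (hdec w hw).2
          have huniv2 : ({u, v} : Finset (Fin m)) = Finset.univ := by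
            apply Finset.eq_univ_iff_forall.mpr
            intro i
            have hcard : ({u, v} : Finset (Fin m)).card = 2 := by
              rw [Finset.card_insert_of_notMem (by simp [huv]), Finset.card_singleton]
            have : ({u, v} : Finset (Fin m)) = Finset.univ := by
              apply Finset.eq_univ_of_card
              rw [hcard, Fintype.card_fin, hm2]
            rw [this]
            exact Finset.mem_univ i
          rw [← huniv2, Finset.sum_pair huv] at hsum
          linarith
        · left
          intro w hw
          have hx := (hdec w hw).1
          rw [hLX0] at hx
          have h1 := congrFun hx u
          have h2 := congrFun hx v
          simp only [Matrix.zero_mulVec, Pi.zero_apply, Pi.smul_apply, smul_eq_mul] at h1 h2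
          have hmun' : mu - (n:ℝ) ≠ 0 := fun hc => hmun (by linarith)
          have h1' : w (Sum.inl u) = 0 := by
            by_contra hne
            exact (mul_ne_zero hmun' hne) h1.symm
          have h2' : w (Sum.inl v) = 0 := by
            by_contra hne
            exact (mul_ne_zero hmun' hne) h2.symm
          rw [h1', h2']
end

section
/- Let m ≥ 2, u ∈ {1,…,m} and w ∈ {1,…,n}. Then the vertices u of X and m+w of Y are not strongly cospectral with respect to L. -/
open Matrix Complex

lemma exists_eigvec_aux (m : ℕ) (hm : 2 ≤ m) (LX : Matrix (Fin m) (Fin m) ℝ)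
    (hLXsymm : LX.IsSymm) (hLXrow : ∀ i, ∑ j, LX i j = 0) (u : Fin m) :
    ∃ (lam : ℝ) (x : Fin m → ℝ), LX.mulVec x = lam • x ∧ (∑ k, x k = 0) ∧ x u ≠ 0 := by
  have hm0 : (m : ℝ) ≠ 0 := by
    have : 0 < m := lt_of_lt_of_le (by norm_num) hm
    exact_mod_cast this.ne'
  have hH : LX.IsHermitian := by
    ext i j
    simpa [Matrix.conjTranspose_apply] using hLXsymm.apply i j
  have hcol : ∀ j, ∑ k, LX k j = 0 := by
    intro j
    calc ∑ k, LX k j = ∑ k, LX j k := by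
          refine Finset.sum_congr rfl fun k _ => ?_
          exact (hLXsymm.apply k j).symm ▸ (hLXsymm.apply j k)
      _ = 0 := hLXrow j
  set b := hH.eigenvectorBasis with hb
  set μ := hH.eigenvalues with hμ
  set s : Fin m → ℝ := fun i => ∑ k, b i k with hs
  have hμs : ∀ i, μ i * s i = 0 := by
    intro i
    have h1 := hH.mulVec_eigenvectorBasis i
    have h2 : ∑ k, (LX *ᵥ ⇑(b i)) k = ∑ k, (μ i • ⇑(b i)) k := by rw [h1]
    have h3 : ∑ k, (LX *ᵥ ⇑(b i)) k = 0 := by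
      simp only [Matrix.mulVec, dotProduct]
      rw [Finset.sum_comm]
      simp only [← Finset.sum_mul, hcol, zero_mul, Finset.sum_const_zero]
    have h4 : ∑ k, (μ i • ⇑(b i)) k = μ i * s i := by
      simp [Finset.mul_sum, hs]
    rw [h2, h4] at h3
    linarith
  have : Nontrivial (Fin m) := Fin.nontrivial_iff_two_le.mpr hm
  obtain ⟨u', hu'⟩ := exists_ne u
  set δ : EuclideanSpace ℝ (Fin m) :=
    EuclideanSpace.single u (1 : ℝ) - EuclideanSpace.single u' (1 : ℝ) with hδ
  set c : Fin m → ℝ := fun i => b.repr δ i with hc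
  have hrep : ∀ k, ∑ i, c i * b i k = δ k := by
    intro k
    have := b.sum_repr δ
    calc ∑ i, c i * b i k = (∑ i, c i • b i) k := by
          rw [WithLp.ofLp_sum, Finset.sum_apply]; rfl
      _ = δ k := by rw [this]
  have hδu : δ u = 1 := by simp [hδ, EuclideanSpace.single_apply, hu'.symm]
  have hδsum : ∑ k, δ k = 0 := by
    simp only [hδ]
    have : ∀ (v : Fin m), ∑ k, (EuclideanSpace.single v (1:ℝ)) k = 1 := by
      intro v; simp [EuclideanSpace.single_apply]
    simp only [PiLp.sub_apply, Finset.sum_sub_distrib, this, sub_self]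
  have hcs : ∑ i, c i * s i = 0 := by
    calc ∑ i, c i * s i = ∑ i, ∑ k, c i * b i k := by
          simp [hs, Finset.mul_sum]
      _ = ∑ k, ∑ i, c i * b i k := Finset.sum_comm
      _ = ∑ k, δ k := by simp [hrep]
      _ = 0 := hδsum
  have hkey : ∑ i, c i * (b i u - s i / m) = 1 := by
    have : ∑ i, c i * (b i u - s i / m)
        = (∑ i, c i * b i u) - (∑ i, c i * s i) / m := by
      rw [Finset.sum_div, ← Finset.sum_sub_distrib]
      refine Finset.sum_congr rfl fun i _ => by ring
    rw [this, hrep u, hδu, hcs]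
    simp
  obtain ⟨i, -, hi⟩ := Finset.exists_ne_zero_of_sum_ne_zero (by rw [hkey]; norm_num :
    ∑ i, c i * (b i u - s i / m) ≠ 0)
  refine ⟨μ i, fun k => b i k - s i / m, ?_, ?_, ?_⟩
  · have hones : LX *ᵥ (fun _ => (1:ℝ)) = 0 := by
      ext k; simpa [Matrix.mulVec, dotProduct] using hLXrow k
    have hxdef : (fun k => b i k - s i / m) = ⇑(b i) - (s i / m) • (fun _ => (1:ℝ)) := by
      ext k; simp
    rw [hxdef, Matrix.mulVec_sub, Matrix.mulVec_smul, hones, smul_zero, sub_zero,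
      hH.mulVec_eigenvectorBasis i]
    ext k
    simp only [Pi.sub_apply, Pi.smul_apply, smul_eq_mul]
    linear_combination (1 / (m:ℝ)) * hμs i
  · rw [Finset.sum_sub_distrib]
    simp only [Finset.sum_const, Finset.card_univ, Fintype.card_fin, nsmul_eq_mul]
    field_simp
    simp [hs]
  · intro h
    apply hi
    have h' : b i u - s i / ↑m = 0 := h
    rw [h', mul_zero]

theorem stmt11 (m n : ℕ) (hm : 2 ≤ m) (hn : 1 ≤ n)
    (LX : Matrix (Fin m) (Fin m) ℝ) (LY : Matrix (Fin n) (Fin n) ℝ)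
    (hLXsymm : LX.IsSymm) (hLXrow : ∀ i, ∑ j, LX i j = 0)
    (hLXoffdiag : ∀ i j, i ≠ j → LX i j ≤ 0)
    (hLYsymm : LY.IsSymm) (hLYrow : ∀ i, ∑ j, LY i j = 0)
    (hLYoffdiag : ∀ i j, i ≠ j → LY i j ≤ 0)
    (u : Fin m) (w : Fin n) :
    ¬ StronglyCospectral (joinL m n LX LY) (Sum.inl u) (Sum.inr w) := by
  obtain ⟨lam, x, hx, hxsum, hxu⟩ := exists_eigvec_aux m hm LX hLXsymm hLXrow u
  set z : Fin m ⊕ Fin n → ℝ := Sum.elim x 0 with hz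
  have hjoin : joinL m n LX LY = Matrix.fromBlocks
      (LX + (n : ℝ) • (1 : Matrix (Fin m) (Fin m) ℝ))
      (-(Matrix.of fun _ _ => (1 : ℝ))) (-(Matrix.of fun _ _ => (1 : ℝ)))
      (LY + (m : ℝ) • (1 : Matrix (Fin n) (Fin n) ℝ)) := rfl
  have hJx : (Matrix.of fun _ _ => (1:ℝ) : Matrix (Fin n) (Fin m) ℝ) *ᵥ x = 0 := by
    ext k; simpa [Matrix.mulVec, dotProduct] using hxsum
  have hmul : (joinL m n LX LY) *ᵥ z = (lam + n) • z := by
    rw [hjoin, Matrix.fromBlocks_mulVec]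
    have h1 : z ∘ Sum.inl = x := rfl
    have h2 : z ∘ Sum.inr = 0 := rfl
    rw [h1, h2]
    ext k
    cases k with
    | inl k =>
      simp only [Sum.elim_inl, Pi.add_apply, Matrix.add_mulVec, Matrix.smul_mulVec,
        Matrix.one_mulVec, hx, hz, Matrix.neg_mulVec, Matrix.mulVec_zero, neg_zero,
        Pi.smul_apply, smul_eq_mul, add_zero]
      ring
    | inr k =>
      simp only [Sum.elim_inr, Pi.add_apply, Matrix.neg_mulVec, hJx, Matrix.mulVec_zero,
        Pi.neg_apply, Pi.zero_apply, neg_zero, add_zero, hz, Pi.smul_apply, smul_eq_mul,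
        mul_zero]
  intro hsc
  have hev : IsEigenvalue (joinL m n LX LY) (lam + n) := by
    refine ⟨z, ?_, hmul⟩
    intro h0
    exact hxu (by simpa [hz] using congrFun h0 (Sum.inl u))
  rcases hsc (lam + n) hev with h | h
  · have := h z hmul
    simp only [hz, Sum.elim_inl, Sum.elim_inr, Pi.zero_apply] at this
    exact hxu this
  · have := h z hmul
    simp only [hz, Sum.elim_inl, Sum.elim_inr, Pi.zero_apply, neg_zero] at this
    exact hxu this
end

section
/- Let X be a simple unweighted graph on m ≥ 3 vertices with Laplacian matrix L_X, and let u ≠ v be vertices of X. Then u and v are strongly cospectral with respect to the join Laplacian L if and only if u and v are strongly cospectral with respect to L_X. -/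
open Matrix Complex

open Finset

lemma joinL_mulVec_inl (m n : ℕ) (LX : Matrix (Fin m) (Fin m) ℝ)
    (LY : Matrix (Fin n) (Fin n) ℝ) (x : Fin m ⊕ Fin n → ℝ) (i : Fin m) :
    (joinL m n LX LY *ᵥ x) (Sum.inl i)
      = (LX *ᵥ fun a => x (Sum.inl a)) i + n * x (Sum.inl i) - ∑ j, x (Sum.inr j) := by
  classical
  simp only [joinL, mulVec, dotProduct, Fintype.sum_sum_type, fromBlocks_apply₁₁,
    fromBlocks_apply₁₂, Matrix.add_apply, Matrix.smul_apply, smul_eq_mul, Matrix.one_apply,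
    Matrix.neg_apply, Matrix.of_apply, neg_mul, one_mul, add_mul, mul_ite, mul_one, mul_zero,
    ite_mul, zero_mul, Finset.sum_add_distrib, Finset.sum_ite_eq, Finset.mem_univ, if_true,
    Finset.sum_neg_distrib]
  ring

lemma joinL_mulVec_inr (m n : ℕ) (LX : Matrix (Fin m) (Fin m) ℝ)
    (LY : Matrix (Fin n) (Fin n) ℝ) (x : Fin m ⊕ Fin n → ℝ) (j : Fin n) :
    (joinL m n LX LY *ᵥ x) (Sum.inr j)
      = (LY *ᵥ fun a => x (Sum.inr a)) j + m * x (Sum.inr j) - ∑ i, x (Sum.inl i) := by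
  classical
  simp only [joinL, mulVec, dotProduct, Fintype.sum_sum_type, fromBlocks_apply₂₁,
    fromBlocks_apply₂₂, Matrix.add_apply, Matrix.smul_apply, smul_eq_mul, Matrix.one_apply,
    Matrix.neg_apply, Matrix.of_apply, neg_mul, one_mul, add_mul, mul_ite, mul_one, mul_zero,
    ite_mul, zero_mul, Finset.sum_add_distrib, Finset.sum_ite_eq, Finset.mem_univ, if_true,
    Finset.sum_neg_distrib]
  ring

lemma sum_mulVec_eq_zero {k : ℕ} (M : Matrix (Fin k) (Fin k) ℝ)
    (h : ∀ j, ∑ i, M i j = 0) (z : Fin k → ℝ) : ∑ i, (M *ᵥ z) i = 0 := by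
  simp only [mulVec, dotProduct]
  rw [Finset.sum_comm]
  rw [Finset.sum_congr rfl (fun j _ => by rw [← Finset.sum_mul, h j, zero_mul])]
  simp

lemma lapMatrix_col_sum {k : ℕ} (G : SimpleGraph (Fin k)) [DecidableRel G.Adj] (j : Fin k) :
    ∑ i, G.lapMatrix ℝ i j = 0 := by
  have hrow : ∀ i, ∑ j, G.lapMatrix ℝ i j = 0 := by
    intro i
    have := congrFun (G.lapMatrix_mulVec_const_eq_zero (R := ℝ)) i
    simpa [mulVec, dotProduct] using this
  have hsymm := G.isSymm_lapMatrix (R := ℝ)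
  calc ∑ i, G.lapMatrix ℝ i j = ∑ i, G.lapMatrix ℝ j i := by
        refine Finset.sum_congr rfl fun i _ => ?_
        conv_lhs => rw [← hsymm]
        rfl
    _ = 0 := hrow j

lemma lapMatrix_sum_mulVec {k : ℕ} (G : SimpleGraph (Fin k)) [DecidableRel G.Adj]
    (z : Fin k → ℝ) : ∑ i, (G.lapMatrix ℝ *ᵥ z) i = 0 :=
  sum_mulVec_eq_zero _ (lapMatrix_col_sum G) z

lemma lapMatrix_mulVec_eq_zero_iff {k : ℕ} (G : SimpleGraph (Fin k)) [DecidableRel G.Adj]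
    (x : Fin k → ℝ) :
    G.lapMatrix ℝ *ᵥ x = 0 ↔ ∀ i j, G.Adj i j → x i = x j := by
  exact SimpleGraph.lapMatrix_mulVec_eq_zero_iff_forall_adj G

lemma neighbor_sum_split {k : ℕ} (G : SimpleGraph (Fin k)) [DecidableRel G.Adj] (i : Fin k)
    (φ : Fin k → ℝ) :
    ∑ j ∈ G.neighborFinset i, φ j + ∑ j ∈ Gᶜ.neighborFinset i, φ j + φ i = ∑ j, φ j := by
  classical
  have h1 : G.neighborFinset i = Finset.univ.filter (fun j => G.Adj i j) := by
    ext j; simp [SimpleGraph.mem_neighborFinset]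
  have h2 : Gᶜ.neighborFinset i = Finset.univ.filter (fun j => Gᶜ.Adj i j) := by
    ext j; simp [SimpleGraph.mem_neighborFinset]
  rw [h1, h2, Finset.sum_filter, Finset.sum_filter]
  rw [← Finset.sum_add_distrib]
  have h3 : φ i = ∑ j, if j = i then φ j else 0 := by
    rw [Finset.sum_ite_eq' Finset.univ i φ]
    simp
  rw [h3, ← Finset.sum_add_distrib]
  refine Finset.sum_congr rfl fun j _ => ?_
  by_cases hij : j = i
  · subst hij
    simp [SimpleGraph.irrefl]
  · by_cases hadj : G.Adj i j
    · have : ¬ Gᶜ.Adj i j := by simp [SimpleGraph.compl_adj, hadj]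
      simp [hadj, hij, this]
    · have : Gᶜ.Adj i j := ⟨fun h => hij h.symm, hadj⟩
      simp [hadj, hij, this]

lemma wlap_form_key {k : ℕ} (LY : Matrix (Fin k) (Fin k) ℝ) (hs : LY.IsSymm)
    (hrow : ∀ i, ∑ j, LY i j = 0) (z : Fin k → ℝ) :
    ∑ i, ∑ j, (-(LY i j)) * (z i - z j)^2 = 2 * ∑ j, z j * (LY *ᵥ z) j := by
  have hcol : ∀ j, ∑ i, LY i j = 0 := by
    intro j
    calc ∑ i, LY i j = ∑ i, LY j i := by
          refine Finset.sum_congr rfl fun i _ => ?_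
          conv_lhs => rw [← hs]
          rfl
      _ = 0 := hrow j
  have e0 : ∀ i j : Fin k, (-(LY i j)) * (z i - z j)^2
      = (-(LY i j)) * (z i)^2 + (-(LY i j)) * (z j)^2 + 2 * (z i * (LY i j * z j)) :=
    fun i j => by ring
  simp_rw [e0, Finset.sum_add_distrib]
  have e1 : ∑ i : Fin k, ∑ j, (-(LY i j)) * (z i)^2 = 0 := by
    refine Finset.sum_eq_zero fun i _ => ?_
    rw [← Finset.sum_mul]
    rw [Finset.sum_neg_distrib, hrow, neg_zero, zero_mul]
  have e2 : ∑ i : Fin k, ∑ j, (-(LY i j)) * (z j)^2 = 0 := by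
    rw [Finset.sum_comm]
    refine Finset.sum_eq_zero fun j _ => ?_
    rw [← Finset.sum_mul]
    simp [Finset.sum_neg_distrib, hcol]
  have e3 : ∑ i : Fin k, ∑ j, 2 * (z i * (LY i j * z j)) = 2 * ∑ j, z j * (LY *ᵥ z) j := by
    simp only [mulVec, dotProduct, Finset.mul_sum]
  rw [e1, e2, e3]
  ring

lemma wlap_form_nonneg {k : ℕ} (LY : Matrix (Fin k) (Fin k) ℝ) (hs : LY.IsSymm)
    (hrow : ∀ i, ∑ j, LY i j = 0) (hoff : ∀ i j, i ≠ j → LY i j ≤ 0) (z : Fin k → ℝ) :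
    0 ≤ ∑ j, z j * (LY *ᵥ z) j := by
  have key := wlap_form_key LY hs hrow z
  have pos : 0 ≤ ∑ i, ∑ j, (-(LY i j)) * (z i - z j)^2 := by
    refine Finset.sum_nonneg fun i _ => Finset.sum_nonneg fun j _ => ?_
    by_cases hij : i = j
    · subst hij; simp
    · exact mul_nonneg (neg_nonneg.mpr (hoff i j hij)) (sq_nonneg _)
  linarith
lemma key_invariant {k : ℕ} (M : Matrix (Fin k) (Fin k) ℝ) (hM : M.IsHermitian) (u : Fin k)
    (S : Submodule ℝ (EuclideanSpace ℝ (Fin k)))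
    (hS : ∀ x ∈ S, Matrix.toEuclideanLin M x ∈ S)
    (heig : ∀ (μ : ℝ) (x : EuclideanSpace ℝ (Fin k)), x ∈ S →
      Matrix.toEuclideanLin M x = μ • x → x u = 0) :
    ∀ x ∈ S, x u = 0 := by
  have hsymm : (Matrix.toEuclideanLin M).IsSymmetric :=
    Matrix.isHermitian_iff_isSymmetric.mp hM
  set T := (Matrix.toEuclideanLin M).restrict hS with hT
  have hTsymm : T.IsSymmetric := hsymm.restrict_invariant hS
  have htop : (⨆ μ : ℝ, Module.End.eigenspace T μ) = ⊤ :=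
    Submodule.orthogonal_eq_bot_iff.mp hTsymm.orthogonalComplement_iSup_eigenspaces_eq_bot
  let f : S →ₗ[ℝ] ℝ :=
    { toFun := fun x => (x : EuclideanSpace ℝ (Fin k)) u
      map_add' := by intros; rfl
      map_smul' := by intros; rfl }
  have hle : (⨆ μ : ℝ, Module.End.eigenspace T μ) ≤ LinearMap.ker f := by
    refine iSup_le fun μ => ?_
    intro x hx
    have hx' : T x = μ • x := Module.End.mem_eigenspace_iff.mp hx
    have : Matrix.toEuclideanLin M (x : EuclideanSpace ℝ (Fin k))
        = μ • (x : EuclideanSpace ℝ (Fin k)) := by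
      have h2 := congrArg (Submodule.subtype S) hx'
      exact h2
    exact heig μ x x.2 this
  have : LinearMap.ker f = ⊤ := top_unique (htop ▸ hle)
  intro x hx
  exact (LinearMap.mem_ker.mp (this ▸ Submodule.mem_top : (⟨x, hx⟩ : S) ∈ LinearMap.ker f))

lemma toEuclideanLin_eq_mulVec {k : ℕ} (M : Matrix (Fin k) (Fin k) ℝ)
    (x : EuclideanSpace ℝ (Fin k)) :
    Matrix.toEuclideanLin M x = M *ᵥ x := rfl

lemma cluster_contradiction {k : ℕ} (M : Matrix (Fin k) (Fin k) ℝ) (hM : M.IsHermitian)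
    (u : Fin k) (C : Finset (Fin k)) (huC : u ∈ C) (hC2 : 2 ≤ C.card)
    (hinv : ∀ (φ : Fin k → ℝ), (∀ i ∉ C, φ i = 0) → (∑ i ∈ C, φ i = 0) →
       ∀ i ∉ C, (M *ᵥ φ) i = 0)
    (hsumM : ∀ φ : Fin k → ℝ, ∑ i, (M *ᵥ φ) i = 0)
    (heig : ∀ (μ : ℝ) (φ : Fin k → ℝ), (∀ i ∉ C, φ i = 0) → (∑ i ∈ C, φ i = 0) →
       M *ᵥ φ = μ • φ → φ ≠ 0 → φ u = 0) : False := by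
  classical
  let S : Submodule ℝ (EuclideanSpace ℝ (Fin k)) :=
    { carrier := {x | (∀ i ∉ C, x i = 0) ∧ ∑ i ∈ C, x i = 0}
      add_mem' := by
        rintro a b ⟨ha1, ha2⟩ ⟨hb1, hb2⟩
        refine ⟨fun i hi => ?_, ?_⟩
        · show a i + b i = 0; rw [ha1 i hi, hb1 i hi, add_zero]
        · show ∑ i ∈ C, (a i + b i) = 0
          rw [Finset.sum_add_distrib, ha2, hb2, add_zero]
      zero_mem' := ⟨fun _ _ => rfl, by simp⟩
      smul_mem' := by
        rintro c a ⟨ha1, ha2⟩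
        refine ⟨fun i hi => ?_, ?_⟩
        · show c * a i = 0; rw [ha1 i hi, mul_zero]
        · show ∑ i ∈ C, c * a i = 0
          rw [← Finset.mul_sum, ha2, mul_zero] }
  have hmemS : ∀ x : EuclideanSpace ℝ (Fin k),
      x ∈ S ↔ (∀ i ∉ C, x i = 0) ∧ ∑ i ∈ C, x i = 0 := fun _ => Iff.rfl
  have hS : ∀ x ∈ S, Matrix.toEuclideanLin M x ∈ S := by
    intro x hx
    rw [hmemS] at hx ⊢
    rw [toEuclideanLin_eq_mulVec]
    have h1 : ∀ i ∉ C, (M *ᵥ x) i = 0 := hinv x hx.1 hx.2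
    refine ⟨h1, ?_⟩
    have := hsumM x
    rw [← Finset.sum_subset (Finset.subset_univ C)] at this
    · exact this
    · intro i _ hi; exact h1 i hi
  have hvanish : ∀ x ∈ S, x u = 0 := by
    refine key_invariant M hM u S hS ?_
    intro μ x hx hxe
    rw [hmemS] at hx
    by_cases h0 : x = (0 : EuclideanSpace ℝ (Fin k))
    · rw [h0]; rfl
    · exact heig μ x hx.1 hx.2 (by rw [← toEuclideanLin_eq_mulVec]; exact congrArg WithLp.ofLp hxe) (by simpa using h0)
  -- the witness vector
  let ψ : Fin k → ℝ := fun i => if i ∈ C then (if i = u then ((C.card : ℝ) - 1) else (-1)) else 0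
  have hψS : (WithLp.toLp 2 ψ : EuclideanSpace ℝ (Fin k)) ∈ S := by
    rw [hmemS]
    show (∀ i ∉ C, ψ i = 0) ∧ ∑ i ∈ C, ψ i = 0
    constructor
    · intro i hi; simp only [ψ, if_neg hi]
    · have : ∑ i ∈ C, ψ i = ∑ i ∈ C, (if i = u then ((C.card : ℝ) - 1) else (-1)) :=
        Finset.sum_congr rfl fun i hi => by simp only [ψ, if_pos hi]
      rw [this, ← Finset.add_sum_erase C _ huC, if_pos rfl]
      have hrest : ∑ i ∈ C.erase u, (if i = u then ((C.card : ℝ) - 1) else (-1)) = -((C.card : ℝ) - 1) := by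
        rw [Finset.sum_congr rfl (fun i hi => if_neg (Finset.ne_of_mem_erase hi))]
        rw [Finset.sum_const, Finset.card_erase_of_mem huC, nsmul_eq_mul]
        have : ((C.card - 1 : ℕ) : ℝ) = (C.card : ℝ) - 1 := by
          have : 1 ≤ C.card := le_trans one_le_two hC2
          push_cast [this]; ring
        rw [this]; ring
      rw [hrest]; ring
  have : ψ u = 0 := hvanish (WithLp.toLp 2 ψ) hψS
  have hψu : ψ u = (C.card : ℝ) - 1 := by simp [ψ, huC]
  rw [hψu] at this
  have : (C.card : ℝ) = 1 := by linarith
  have : C.card = 1 := by exact_mod_cast this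
  omega
lemma two_valued {k : ℕ} (hk : 3 ≤ k) (u v : Fin k) (E : Fin k → Fin k → Prop)
    (Hfun : ∀ t : Fin k → ℝ, (∀ i j, E i j → t i = t j) → (t u + t v) * k = 2 * ∑ i, t i)
    (w : Fin k → ℝ) (hw : ∀ i j, E i j → w i = w j) (hwu : w u ≠ 0) (hsum : ∑ i, w i = 0) :
    ∃ C : Finset (Fin k), u ∈ C ∧ v ∉ C ∧ 2 ≤ C.card ∧
      ∀ i j, i ∈ C → j ∉ C → w i ≠ w j := by
  classical
  set a := w u with ha
  have hk0 : (0 : ℝ) < k := by positivity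
  have hwv : w v = -a := by
    have h := Hfun w hw
    rw [hsum, mul_zero] at h
    have : a + w v = 0 := by
      rcases mul_eq_zero.mp h with h' | h'
      · exact h'
      · exact absurd h' (ne_of_gt hk0)
    linarith
  have h2 : ∑ i, (w i)^2 = k * a^2 := by
    have h := Hfun (fun i => (w i)^2) (fun i j hij => by rw [hw i j hij])
    simp only [hwv] at h
    nlinarith [h]
  have h4 : ∑ i, (w i)^4 = k * a^4 := by
    have h := Hfun (fun i => (w i)^4) (fun i j hij => by rw [hw i j hij])
    simp only [hwv] at h
    nlinarith [h]
  have hsq : ∀ i, (w i)^2 = a^2 := by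
    have hz : ∑ i, ((w i)^2 - a^2)^2 = 0 := by
      have : ∑ i, ((w i)^2 - a^2)^2
          = ∑ i, ((w i)^4 - 2*a^2*(w i)^2 + a^4) := by
        refine Finset.sum_congr rfl fun i _ => by ring
      rw [this, Finset.sum_add_distrib, Finset.sum_sub_distrib, h4, ← Finset.mul_sum, h2,
        Finset.sum_const, Finset.card_univ, Fintype.card_fin, nsmul_eq_mul]
      ring
    intro i
    have h5 := Finset.sum_eq_zero_iff_of_nonneg (fun j _ => sq_nonneg ((w j)^2 - a^2)) |>.mp hz
      i (Finset.mem_univ i)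
    have h6 := sq_eq_zero_iff.mp h5
    linarith
  set C : Finset (Fin k) := Finset.univ.filter (fun i => w i = a) with hC
  have hmem : ∀ i, i ∈ C ↔ w i = a := fun i => by simp [hC]
  have hout : ∀ i, i ∉ C → w i = -a := by
    intro i hi
    rw [hmem] at hi
    have h7 : (w i - a) * (w i + a) = 0 := by nlinarith [hsq i]
    rcases mul_eq_zero.mp h7 with h' | h'
    · exact absurd (by linarith) hi
    · linarith
  refine ⟨C, (hmem u).mpr rfl, ?_, ?_, ?_⟩
  · rw [hmem, hwv]
    intro h
    apply hwu
    linarith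
  · -- cardinality
    have hsum' : ∑ i, w i = (C.card : ℝ) * a + ((k - C.card : ℕ) : ℝ) * (-a) := by
      rw [← Finset.sum_filter_add_sum_filter_not Finset.univ (fun i => w i = a)]
      have e1 : ∑ i ∈ Finset.univ.filter (fun i => w i = a), w i = (C.card : ℝ) * a := by
        rw [Finset.sum_congr rfl (fun i hi => (Finset.mem_filter.mp hi).2), Finset.sum_const,
          nsmul_eq_mul]
      have e2 : ∑ i ∈ Finset.univ.filter (fun i => ¬ w i = a), w i
          = ((k - C.card : ℕ) : ℝ) * (-a) := by
        have : ∀ i ∈ Finset.univ.filter (fun i => ¬ w i = a), w i = -a := by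
          intro i hi
          exact hout i (by rw [hmem]; exact (Finset.mem_filter.mp hi).2)
        rw [Finset.sum_congr rfl this, Finset.sum_const, nsmul_eq_mul]
        congr 2
        rw [Finset.filter_not, Finset.card_sdiff_of_subset (Finset.filter_subset _ _)]
        simp [hC]
      rw [e1, e2]
    rw [hsum] at hsum'
    have hcard_le : C.card ≤ k := le_trans (Finset.card_filter_le _ _) (by simp)
    have hzero : (((C.card : ℝ)) - ((k - C.card : ℕ) : ℝ)) * a = 0 := by linarith
    have heq : ((C.card : ℝ)) = ((k - C.card : ℕ) : ℝ) := by
      rcases mul_eq_zero.mp hzero with h' | h'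
      · linarith
      · exact absurd h' hwu
    rw [Nat.cast_sub hcard_le] at heq
    have h2c : 2 * (C.card : ℝ) = k := by linarith
    have : 2 * C.card = k := by exact_mod_cast h2c
    omega
  · intro i j hi hj
    rw [(hmem i).mp hi, hout j hj]
    intro h
    exact hwu (by linarith)

lemma lift_eigen (m n : ℕ) (LX : Matrix (Fin m) (Fin m) ℝ) (LY : Matrix (Fin n) (Fin n) ℝ)
    (φ : Fin m → ℝ) (μ : ℝ) (hφ : LX *ᵥ φ = μ • φ) (hs : ∑ i, φ i = 0) :
    joinL m n LX LY *ᵥ Sum.elim φ 0 = (μ + n) • Sum.elim φ 0 := by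
  funext x
  cases x with
  | inl i =>
    rw [Pi.smul_apply, joinL_mulVec_inl]
    have h1 : (fun a => Sum.elim φ (0 : Fin n → ℝ) (Sum.inl a)) = φ := rfl
    rw [h1]
    have h2 := congrFun hφ i
    simp only [Pi.smul_apply, smul_eq_mul] at h2 ⊢
    simp only [Sum.elim_inl, Sum.elim_inr, Pi.zero_apply, Finset.sum_const_zero]
    rw [h2]; ring
  | inr j =>
    rw [Pi.smul_apply, joinL_mulVec_inr]
    have h1 : (fun a => Sum.elim φ (0 : Fin n → ℝ) (Sum.inr a)) = (0 : Fin n → ℝ) := rfl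
    rw [h1]
    simp only [Sum.elim_inl, Sum.elim_inr, Pi.zero_apply, smul_eq_mul, Matrix.mulVec_zero,
      Pi.zero_apply, mul_zero, hs]
    simp [hs]

lemma degree_compl_real {m : ℕ} (G : SimpleGraph (Fin m)) [DecidableRel G.Adj] (i : Fin m) :
    ((Gᶜ.degree i : ℝ)) = (m : ℝ) - 1 - G.degree i := by
  have h := G.degree_compl (v := i)
  have hlt : G.degree i < m := by
    simpa [Fintype.card_fin] using G.degree_lt_card_verts i
  rw [h]
  have h1 : (1:ℕ) ≤ m := by omega
  have h2 : G.degree i ≤ m - 1 := by omega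
  push_cast [Nat.cast_sub h2, Nat.cast_sub h1, Fintype.card_fin]
  ring

/-- For a vector constant along the edges of the complement graph and of sum zero,
`lapMatrix` acts as multiplication by `m`. -/
lemma lap_eigen_of_compl_const {m : ℕ} (G : SimpleGraph (Fin m)) [DecidableRel G.Adj]
    (hm : 0 < m) (t : Fin m → ℝ) (ht : ∀ i j, Gᶜ.Adj i j → t i = t j) (hs : ∑ i, t i = 0) :
    G.lapMatrix ℝ *ᵥ t = (m : ℝ) • t := by
  funext i
  rw [SimpleGraph.lapMatrix_mulVec_apply, Pi.smul_apply, smul_eq_mul]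
  have hcompl_sum : ∑ j ∈ Gᶜ.neighborFinset i, t j = (Gᶜ.degree i : ℝ) * t i := by
    rw [Finset.sum_congr rfl (fun j hj => (ht i j (by rwa [← SimpleGraph.mem_neighborFinset])).symm)]
    rw [Finset.sum_const, SimpleGraph.card_neighborFinset_eq_degree, nsmul_eq_mul]
  have hsplit := neighbor_sum_split G i t
  rw [hcompl_sum, hs] at hsplit
  have hdc := degree_compl_real G i
  have : ∑ j ∈ G.neighborFinset i, t j
      = -((m : ℝ) - 1 - G.degree i) * t i - t i := by
    rw [← hdc]; linarith
  rw [this]; ring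

/-- the kernel-type characterisation for an `m`-eigenvector of the Laplacian -/
lemma compl_const_of_lap_eigen {m : ℕ} (G : SimpleGraph (Fin m)) [DecidableRel G.Adj]
    (hm : 0 < m) (w : Fin m → ℝ) (hw : G.lapMatrix ℝ *ᵥ w = (m : ℝ) • w)
    (hs : ∑ i, w i = 0) : ∀ i j, Gᶜ.Adj i j → w i = w j := by
  rw [← lapMatrix_mulVec_eq_zero_iff]
  funext i
  rw [SimpleGraph.lapMatrix_mulVec_apply]
  have hsplit := neighbor_sum_split G i w
  have hGn : ∑ j ∈ G.neighborFinset i, w j = (G.degree i : ℝ) * w i - (m:ℝ) * w i := by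
    have h := congrFun hw i
    rw [SimpleGraph.lapMatrix_mulVec_apply, Pi.smul_apply, smul_eq_mul] at h
    linarith
  rw [hGn, hs] at hsplit
  rw [degree_compl_real G i, Pi.zero_apply]
  linarith

lemma sum_eq_sum_of_support {m : ℕ} (C : Finset (Fin m)) (φ : Fin m → ℝ)
    (h : ∀ i ∉ C, φ i = 0) : ∑ i, φ i = ∑ i ∈ C, φ i :=
  (Finset.sum_subset (Finset.subset_univ C) (fun i _ hi => h i hi)).symm

lemma no_minus_at_m {m : ℕ} (hm : 3 ≤ m) (G : SimpleGraph (Fin m)) [DecidableRel G.Adj]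
    (u v : Fin m) (SCX : StronglyCospectral (G.lapMatrix ℝ) u v)
    (hminus : ∀ w : Fin m → ℝ, G.lapMatrix ℝ *ᵥ w = (m:ℝ) • w → w u = -(w v))
    (w₀ : Fin m → ℝ) (hw₀ : G.lapMatrix ℝ *ᵥ w₀ = (m:ℝ) • w₀) (hw₀u : w₀ u ≠ 0) : False := by
  classical
  have hm0 : (0:ℝ) < m := by positivity
  have hsum0 : ∑ i, w₀ i = 0 := by
    have h1 := lapMatrix_sum_mulVec G w₀
    rw [hw₀] at h1
    simp only [Pi.smul_apply, smul_eq_mul, ← Finset.mul_sum] at h1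
    rcases mul_eq_zero.mp h1 with h | h
    · exact absurd h (ne_of_gt hm0)
    · exact h
  have hcompl : ∀ i j, Gᶜ.Adj i j → w₀ i = w₀ j :=
    compl_const_of_lap_eigen G (by omega) w₀ hw₀ hsum0
  have Hfun : ∀ t : Fin m → ℝ, (∀ i j, Gᶜ.Adj i j → t i = t j) →
      (t u + t v) * m = 2 * ∑ i, t i := by
    intro t ht
    set s := ∑ i, t i with hs
    set t' : Fin m → ℝ := fun i => t i - s / m with ht'
    have ht'const : ∀ i j, Gᶜ.Adj i j → t' i = t' j := by
      intro i j hij; simp only [ht']; rw [ht i j hij]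
    have ht'sum : ∑ i, t' i = 0 := by
      simp only [ht', Finset.sum_sub_distrib, Finset.sum_const, Finset.card_univ,
        Fintype.card_fin, nsmul_eq_mul, ← hs]
      field_simp
      ring
    have := hminus t' (lap_eigen_of_compl_const G (by omega) t' ht'const ht'sum)
    simp only [ht'] at this
    have hmm : (m:ℝ) ≠ 0 := ne_of_gt hm0
    field_simp at this
    linarith
  obtain ⟨C, huC, hvC, hC2, hcross⟩ :=
    two_valued hm u v Gᶜ.Adj Hfun w₀ hcompl hw₀u hsum0
  -- every pair crossing the boundary of C is an edge of G
  have hadjcross : ∀ i j, i ∈ C → j ∉ C → G.Adj i j := by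
    intro i j hi hj
    have hne : w₀ i ≠ w₀ j := hcross i j hi hj
    have hij : i ≠ j := fun h => hne (by rw [h])
    by_contra hnadj
    exact hne (hcompl i j ⟨hij, hnadj⟩)
  refine cluster_contradiction (G.lapMatrix ℝ) (SimpleGraph.posSemidef_lapMatrix ℝ G).1 u C huC
    hC2 ?_ (lapMatrix_sum_mulVec G) ?_
  · -- invariance
    intro φ hφ hφs i hi
    rw [SimpleGraph.lapMatrix_mulVec_apply, hφ i hi, mul_zero, zero_sub, neg_eq_zero]
    have hCsub : C ⊆ G.neighborFinset i := by
      intro j hj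
      rw [SimpleGraph.mem_neighborFinset]
      exact (hadjcross j i hj hi).symm
    rw [← Finset.sum_subset hCsub (fun j _ hj => hφ j hj)]
    exact hφs
  · -- eigenvectors supported in C vanish at u
    intro μ φ hφ hφs hφe hφne
    have hev : IsEigenvalue (G.lapMatrix ℝ) μ := ⟨φ, hφne, hφe⟩
    have hv0 : φ v = 0 := hφ v hvC
    rcases SCX μ hev with h | h
    · rw [h φ hφe, hv0]
    · rw [h φ hφe, hv0, neg_zero]

lemma no_minus_join {m n : ℕ} (hm : 3 ≤ m) (G : SimpleGraph (Fin m)) [DecidableRel G.Adj]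
    (LY : Matrix (Fin n) (Fin n) ℝ) (u v : Fin m)
    (SCL : StronglyCospectral (joinL m n (G.lapMatrix ℝ) LY) (Sum.inl u) (Sum.inl v))
    (hminus : ∀ x : Fin m ⊕ Fin n → ℝ, joinL m n (G.lapMatrix ℝ) LY *ᵥ x = (n:ℝ) • x →
      x (Sum.inl u) = -(x (Sum.inl v)))
    (w₀ : Fin m → ℝ) (hker : G.lapMatrix ℝ *ᵥ w₀ = 0) (hsum0 : ∑ i, w₀ i = 0)
    (hw₀u : w₀ u ≠ 0) : False := by
  classical
  have hm0 : (0:ℝ) < m := by positivity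
  have hconst : ∀ i j, G.Adj i j → w₀ i = w₀ j :=
    (lapMatrix_mulVec_eq_zero_iff G w₀).mp hker
  have Hfun : ∀ t : Fin m → ℝ, (∀ i j, G.Adj i j → t i = t j) →
      (t u + t v) * m = 2 * ∑ i, t i := by
    intro t ht
    set s := ∑ i, t i with hs
    set t' : Fin m → ℝ := fun i => t i - s / m with ht'
    have ht'const : ∀ i j, G.Adj i j → t' i = t' j := by
      intro i j hij; simp only [ht']; rw [ht i j hij]
    have ht'sum : ∑ i, t' i = 0 := by
      simp only [ht', Finset.sum_sub_distrib, Finset.sum_const, Finset.card_univ,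
        Fintype.card_fin, nsmul_eq_mul, ← hs]
      field_simp
      ring
    have hker' : G.lapMatrix ℝ *ᵥ t' = (0:ℝ) • t' := by
      rw [zero_smul]
      exact (lapMatrix_mulVec_eq_zero_iff G t').mpr ht'const
    have hlift := lift_eigen m n (G.lapMatrix ℝ) LY t' 0 hker' ht'sum
    rw [zero_add] at hlift
    have := hminus _ hlift
    simp only [Sum.elim_inl, ht'] at this
    have hmm : (m:ℝ) ≠ 0 := ne_of_gt hm0
    field_simp at this
    linarith
  obtain ⟨C, huC, hvC, hC2, hcross⟩ :=
    two_valued hm u v G.Adj Hfun w₀ hconst hw₀u hsum0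
  have hnadjcross : ∀ i j, i ∈ C → j ∉ C → ¬ G.Adj i j := by
    intro i j hi hj hadj
    exact hcross i j hi hj (hconst i j hadj)
  refine cluster_contradiction (G.lapMatrix ℝ) (SimpleGraph.posSemidef_lapMatrix ℝ G).1 u C huC
    hC2 ?_ (lapMatrix_sum_mulVec G) ?_
  · -- invariance : no edges leave C
    intro φ hφ hφs i hi
    rw [SimpleGraph.lapMatrix_mulVec_apply, hφ i hi, mul_zero, zero_sub, neg_eq_zero]
    refine Finset.sum_eq_zero fun j hj => ?_
    rw [SimpleGraph.mem_neighborFinset] at hj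
    refine hφ j fun hjC => ?_
    exact hnadjcross j i hjC hi hj.symm
  · -- eigenvectors supported in C vanish at u
    intro μ φ hφ hφs hφe hφne
    have hφsum : ∑ i, φ i = 0 := by rw [sum_eq_sum_of_support C φ hφ]; exact hφs
    have hlift := lift_eigen m n (G.lapMatrix ℝ) LY φ μ hφe hφsum
    have hxne : (Sum.elim φ (0 : Fin n → ℝ)) ≠ 0 := by
      intro h
      apply hφne
      funext i
      exact congrFun h (Sum.inl i)
    have hev : IsEigenvalue (joinL m n (G.lapMatrix ℝ) LY) (μ + n) :=
      ⟨Sum.elim φ 0, hxne, hlift⟩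
    have hv0 : φ v = 0 := hφ v hvC
    rcases SCL (μ + n) hev with h | h
    · have := h _ hlift
      simpa [hv0] using this
    · have := h _ hlift
      simpa [hv0] using this

lemma col_sum_zero_of_symm {k : ℕ} (M : Matrix (Fin k) (Fin k) ℝ) (hs : M.IsSymm)
    (hrow : ∀ i, ∑ j, M i j = 0) (j : Fin k) : ∑ i, M i j = 0 := by
  calc ∑ i, M i j = ∑ i, M j i := by
        refine Finset.sum_congr rfl fun i _ => ?_
        conv_lhs => rw [← hs]
        rfl
    _ = 0 := hrow j

theorem stmt12 (m n : ℕ) (hm : 3 ≤ m) (hn : 1 ≤ n)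
    (G : SimpleGraph (Fin m)) [DecidableRel G.Adj]
    (LY : Matrix (Fin n) (Fin n) ℝ)
    (hLYsymm : LY.IsSymm) (hLYrow : ∀ i, ∑ j, LY i j = 0)
    (hLYoffdiag : ∀ i j, i ≠ j → LY i j ≤ 0)
    (u v : Fin m) (huv : u ≠ v) :
    StronglyCospectral (joinL m n (G.lapMatrix ℝ) LY) (Sum.inl u) (Sum.inl v) ↔
      StronglyCospectral (G.lapMatrix ℝ) u v := by
  classical
  have hm0 : (0:ℝ) < m := by positivity
  have hn0 : (0:ℝ) < n := by positivity
  constructor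
  · -- join strongly cospectral → strongly cospectral in X
    intro SCL μ hμ
    obtain ⟨w₀, hw₀ne, hw₀eq⟩ := hμ
    by_cases hμ0 : μ = 0
    · subst hμ0
      left
      intro w hw
      rw [zero_smul] at hw
      set s := ∑ i, w i with hs
      set w' : Fin m → ℝ := fun i => w i - s / m with hw'
      have hw'repr : w' = w - (s/m) • (fun _ => (1:ℝ)) := by
        funext i; simp [hw', smul_eq_mul]
      have hw'ker : G.lapMatrix ℝ *ᵥ w' = 0 := by
        rw [hw'repr, Matrix.mulVec_sub, Matrix.mulVec_smul, hw,
          G.lapMatrix_mulVec_const_eq_zero]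
        simp
      have hw'sum : ∑ i, w' i = 0 := by
        simp only [hw', Finset.sum_sub_distrib, Finset.sum_const, Finset.card_univ,
          Fintype.card_fin, nsmul_eq_mul, ← hs]
        field_simp
        ring
      by_cases hw'0 : w' = 0
      · have hu := congrFun hw'0 u
        have hv := congrFun hw'0 v
        simp only [hw', Pi.zero_apply] at hu hv
        linarith
      · have hker' : G.lapMatrix ℝ *ᵥ w' = (0:ℝ) • w' := by rw [zero_smul]; exact hw'ker
        have hlift := lift_eigen m n (G.lapMatrix ℝ) LY w' 0 hker' hw'sum
        rw [zero_add] at hlift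
        have hxne : (Sum.elim w' (0 : Fin n → ℝ)) ≠ 0 := by
          intro h; exact hw'0 (funext fun i => congrFun h (Sum.inl i))
        have hev : IsEigenvalue (joinL m n (G.lapMatrix ℝ) LY) n := ⟨_, hxne, hlift⟩
        rcases SCL n hev with h | h
        · have := h _ hlift
          simp only [Sum.elim_inl, hw'] at this
          linarith
        · by_cases hwu0 : w' u = 0
          · have := h _ hlift
            simp only [Sum.elim_inl] at this
            have hv0 : w' v = 0 := by rw [this] at hwu0; linarith
            simp only [hw'] at hwu0 hv0
            linarith
          · exact absurd (no_minus_join hm G LY u v SCL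
              (fun x hx => h x hx) w' hw'ker hw'sum hwu0) (by simp)
    · -- μ ≠ 0
      have hsum : ∀ w : Fin m → ℝ, G.lapMatrix ℝ *ᵥ w = μ • w → ∑ i, w i = 0 := by
        intro w hw
        have h1 := lapMatrix_sum_mulVec G w
        rw [hw] at h1
        simp only [Pi.smul_apply, smul_eq_mul, ← Finset.mul_sum] at h1
        rcases mul_eq_zero.mp h1 with h | h
        · exact absurd h hμ0
        · exact h
      have hxne : (Sum.elim w₀ (0 : Fin n → ℝ)) ≠ 0 := by
        intro h; exact hw₀ne (funext fun i => congrFun h (Sum.inl i))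
      have hev : IsEigenvalue (joinL m n (G.lapMatrix ℝ) LY) (μ + n) :=
        ⟨_, hxne, lift_eigen m n _ LY w₀ μ hw₀eq (hsum w₀ hw₀eq)⟩
      rcases SCL (μ + n) hev with h | h
      · left
        intro w hw
        have := h _ (lift_eigen m n _ LY w μ hw (hsum w hw))
        simpa using this
      · right
        intro w hw
        have := h _ (lift_eigen m n _ LY w μ hw (hsum w hw))
        simpa using this
  · -- strongly cospectral in X → join strongly cospectral
    intro SCX lam hlam
    have hcolLY := col_sum_zero_of_symm LY hLYsymm hLYrow
    -- componentwise eigen-equations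
    have eqn1 : ∀ (x : Fin m ⊕ Fin n → ℝ), joinL m n (G.lapMatrix ℝ) LY *ᵥ x = lam • x →
        ∀ i, (G.lapMatrix ℝ *ᵥ fun a => x (Sum.inl a)) i + n * x (Sum.inl i)
          - (∑ j, x (Sum.inr j)) = lam * x (Sum.inl i) := by
      intro x hx i
      have := congrFun hx (Sum.inl i)
      rwa [joinL_mulVec_inl, Pi.smul_apply, smul_eq_mul] at this
    have eqn2 : ∀ (x : Fin m ⊕ Fin n → ℝ), joinL m n (G.lapMatrix ℝ) LY *ᵥ x = lam • x →
        ∀ j, (LY *ᵥ fun a => x (Sum.inr a)) j + m * x (Sum.inr j)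
          - (∑ i, x (Sum.inl i)) = lam * x (Sum.inr j) := by
      intro x hx j
      have := congrFun hx (Sum.inr j)
      rwa [joinL_mulVec_inr, Pi.smul_apply, smul_eq_mul] at this
    have ssum1 : ∀ (x : Fin m ⊕ Fin n → ℝ), joinL m n (G.lapMatrix ℝ) LY *ᵥ x = lam • x →
        n * (∑ i, x (Sum.inl i)) - m * (∑ j, x (Sum.inr j)) = lam * ∑ i, x (Sum.inl i) := by
      intro x hx
      have h1 : ∑ i, ((G.lapMatrix ℝ *ᵥ fun a => x (Sum.inl a)) i + n * x (Sum.inl i)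
          - (∑ j, x (Sum.inr j))) = ∑ i, lam * x (Sum.inl i) :=
        Finset.sum_congr rfl fun i _ => eqn1 x hx i
      rw [Finset.sum_sub_distrib, Finset.sum_add_distrib, lapMatrix_sum_mulVec,
        Finset.sum_const, Finset.card_univ, Fintype.card_fin, nsmul_eq_mul,
        ← Finset.mul_sum, ← Finset.mul_sum] at h1
      linarith
    have ssum2 : ∀ (x : Fin m ⊕ Fin n → ℝ), joinL m n (G.lapMatrix ℝ) LY *ᵥ x = lam • x →
        m * (∑ j, x (Sum.inr j)) - n * (∑ i, x (Sum.inl i)) = lam * ∑ j, x (Sum.inr j) := by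
      intro x hx
      have h1 : ∑ j, ((LY *ᵥ fun a => x (Sum.inr a)) j + m * x (Sum.inr j)
          - (∑ i, x (Sum.inl i))) = ∑ j, lam * x (Sum.inr j) :=
        Finset.sum_congr rfl fun j _ => eqn2 x hx j
      rw [Finset.sum_sub_distrib, Finset.sum_add_distrib, sum_mulVec_eq_zero LY hcolLY,
        Finset.sum_const, Finset.card_univ, Fintype.card_fin, nsmul_eq_mul,
        ← Finset.mul_sum, ← Finset.mul_sum] at h1
      linarith
    by_cases hl0 : lam = 0
    · subst hl0
      left
      intro x hx
      set w : Fin m → ℝ := fun i => x (Sum.inl i) with hwdef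
      set z : Fin n → ℝ := fun j => x (Sum.inr j) with hzdef
      set sw := ∑ i, w i with hsw
      set sz := ∑ j, z j with hsz
      have he1 : ∀ i, (G.lapMatrix ℝ *ᵥ w) i = sz - n * w i := by
        intro i
        have := eqn1 x hx i
        simp only [mul_zero, zero_mul] at this
        simp only [← hwdef, ← hzdef, ← hsz] at this
        linarith
      have he2 : ∀ j, (LY *ᵥ z) j = sw - m * z j := by
        intro j
        have := eqn2 x hx j
        simp only [mul_zero, zero_mul] at this
        simp only [← hwdef, ← hzdef, ← hsw] at this
        linarith
      have hQX : ∑ i, w i * (G.lapMatrix ℝ *ᵥ w) i = sz * sw - n * ∑ i, (w i)^2 := by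
        rw [Finset.sum_congr rfl fun i (_ : i ∈ Finset.univ) => by rw [he1 i]]
        have : ∀ i, w i * (sz - n * w i) = w i * sz - n * (w i)^2 := fun i => by ring
        rw [Finset.sum_congr rfl fun i (_ : i ∈ Finset.univ) => this i]
        rw [Finset.sum_sub_distrib, ← Finset.sum_mul, ← Finset.mul_sum, ← hsw]
        ring
      have hQY : ∑ j, z j * (LY *ᵥ z) j = sw * sz - m * ∑ j, (z j)^2 := by
        rw [Finset.sum_congr rfl fun j (_ : j ∈ Finset.univ) => by rw [he2 j]]
        have : ∀ j, z j * (sw - m * z j) = z j * sw - m * (z j)^2 := fun j => by ring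
        rw [Finset.sum_congr rfl fun j (_ : j ∈ Finset.univ) => this j]
        rw [Finset.sum_sub_distrib, ← Finset.sum_mul, ← Finset.mul_sum, ← hsz]
        ring
      have hQXpos : 0 ≤ ∑ i, w i * (G.lapMatrix ℝ *ᵥ w) i := by
        have := (SimpleGraph.posSemidef_lapMatrix ℝ G).dotProduct_mulVec_nonneg w
        simpa [dotProduct] using this
      have hQYpos : 0 ≤ ∑ j, z j * (LY *ᵥ z) j :=
        wlap_form_nonneg LY hLYsymm hLYrow hLYoffdiag z
      have hdouble : ∑ i, ∑ j, (w i - z j)^2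
          = n * (∑ i, (w i)^2) + m * (∑ j, (z j)^2) - 2 * sw * sz := by
        have h1 : ∀ i : Fin m, ∑ j, (w i - z j)^2
            = n * (w i)^2 - 2 * w i * sz + ∑ j, (z j)^2 := by
          intro i
          have e : ∀ j : Fin n, (w i - z j)^2 = (w i)^2 - 2 * w i * z j + (z j)^2 :=
            fun j => by ring
          rw [Finset.sum_congr rfl fun j (_ : j ∈ Finset.univ) => e j]
          rw [Finset.sum_add_distrib, Finset.sum_sub_distrib, Finset.sum_const,
            Finset.card_univ, Fintype.card_fin, nsmul_eq_mul, ← Finset.mul_sum, ← hsz]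
        rw [Finset.sum_congr rfl fun i (_ : i ∈ Finset.univ) => h1 i]
        rw [Finset.sum_add_distrib, Finset.sum_sub_distrib, Finset.sum_const,
          Finset.card_univ, Fintype.card_fin, nsmul_eq_mul, ← Finset.mul_sum, ← Finset.sum_mul]
        rw [← Finset.mul_sum, ← hsw]
        ring
      have hTnonneg : 0 ≤ ∑ i, ∑ j, (w i - z j)^2 :=
        Finset.sum_nonneg fun i _ => Finset.sum_nonneg fun j _ => sq_nonneg _
      have hT0 : ∑ i, ∑ j, (w i - z j)^2 = 0 := by
        rw [hdouble]
        have := hQX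
        have := hQY
        nlinarith [hQXpos, hQYpos, hQX, hQY, hdouble]
      set j₀ : Fin n := ⟨0, hn⟩ with hj₀
      have hinner : ∀ i, ∑ j, (w i - z j)^2 = 0 := by
        intro i
        exact (Finset.sum_eq_zero_iff_of_nonneg
          (fun i _ => Finset.sum_nonneg fun j _ => sq_nonneg _)).mp hT0 i (Finset.mem_univ i)
      have hterm : ∀ i j, (w i - z j)^2 = 0 := by
        intro i j
        exact (Finset.sum_eq_zero_iff_of_nonneg (fun j _ => sq_nonneg _)).mp
          (hinner i) j (Finset.mem_univ j)
      have hu := sub_eq_zero.mp (sq_eq_zero_iff.mp (hterm u j₀))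
      have hv := sub_eq_zero.mp (sq_eq_zero_iff.mp (hterm v j₀))
      show w u = w v
      rw [hu, hv]
    by_cases hlmn : lam = m + n
    · left
      intro x hx
      set w : Fin m → ℝ := fun i => x (Sum.inl i) with hwdef
      set sw := ∑ i, w i with hsw
      set sz := ∑ j, x (Sum.inr j) with hsz
      have hsz' : sz = -sw := by
        have h1 := ssum1 x hx
        rw [hlmn] at h1
        simp only [← hwdef, ← hsw, ← hsz] at h1
        have : m * sz = - (m * sw) := by nlinarith [h1]
        field_simp at this ⊢
        nlinarith [this]
      set w' : Fin m → ℝ := fun i => w i - sw / m with hw'def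
      have hLXw' : G.lapMatrix ℝ *ᵥ w' = (m:ℝ) • w' := by
        have hw'repr : w' = w - (sw/m) • (fun _ => (1:ℝ)) := by
          funext i; simp [hw'def, smul_eq_mul]
        funext i
        rw [hw'repr, Matrix.mulVec_sub, Matrix.mulVec_smul,
          G.lapMatrix_mulVec_const_eq_zero]
        have h1 := eqn1 x hx i
        simp only [← hwdef, ← hsz] at h1
        rw [hlmn] at h1
        have hlx : (G.lapMatrix ℝ *ᵥ w) i = m * w i - sw := by
          rw [hsz'] at h1; linarith
        simp only [Pi.sub_apply, Pi.smul_apply, smul_eq_mul, Pi.zero_apply, hlx]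
        have : (m:ℝ) ≠ 0 := ne_of_gt hm0
        field_simp
        ring
      by_cases h0 : w' = 0
      · have hu := congrFun h0 u
        have hv := congrFun h0 v
        simp only [hw'def, Pi.zero_apply] at hu hv
        show w u = w v
        linarith
      · have hev : IsEigenvalue (G.lapMatrix ℝ) m := ⟨w', h0, hLXw'⟩
        rcases SCX m hev with h | h
        · have := h w' hLXw'
          simp only [hw'def] at this
          show w u = w v
          linarith
        · by_cases hwu0 : w' u = 0
          · have := h w' hLXw'
            rw [hwu0] at this
            have hv0 : w' v = 0 := by linarith
            simp only [hw'def] at hwu0 hv0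
            show w u = w v
            linarith
          · exact absurd (no_minus_at_m hm G u v SCX h w' hLXw' hwu0) (by simp)
    · -- generic eigenvalue
      have key : ∀ (x : Fin m ⊕ Fin n → ℝ), joinL m n (G.lapMatrix ℝ) LY *ᵥ x = lam • x →
          G.lapMatrix ℝ *ᵥ (fun i => x (Sum.inl i)) = (lam - n) • (fun i => x (Sum.inl i)) := by
        intro x hx
        set sw := ∑ i, x (Sum.inl i) with hsw
        set sz := ∑ j, x (Sum.inr j) with hsz
        have h1 := ssum1 x hx
        have h2 := ssum2 x hx
        rw [← hsw, ← hsz] at h1 h2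
        have hfactor : lam * ((m:ℝ) + n - lam) ≠ 0 := by
          intro hc
          rcases mul_eq_zero.mp hc with hc | hc
          · exact hl0 hc
          · exact hlmn (by linarith)
        have hmz : (m:ℝ) * sz = (n - lam) * sw := by linarith
        have h2' : ((m:ℝ) - lam) * sz = n * sw := by linarith
        have hkey : (lam * ((m:ℝ) + n - lam)) * sw = 0 := by
          calc (lam * ((m:ℝ) + n - lam)) * sw
              = m*n*sw - (m - lam)*((n - lam)*sw) := by ring
            _ = m*n*sw - (m - lam)*((m:ℝ)*sz) := by rw [← hmz]
            _ = (m:ℝ)*(n*sw - ((m:ℝ) - lam)*sz) := by ring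
            _ = (m:ℝ)*(n*sw - n*sw) := by rw [h2']
            _ = 0 := by ring
        have hsw0 : sw = 0 := by
          rcases mul_eq_zero.mp hkey with hc | hc
          · exact absurd hc hfactor
          · exact hc
        have hsz0 : sz = 0 := by
          rw [hsw0] at hmz
          simp only [mul_zero] at hmz
          rcases mul_eq_zero.mp hmz with hc | hc
          · exact absurd hc (ne_of_gt hm0)
          · exact hc
        funext i
        have h3 := eqn1 x hx i
        rw [← hsz, hsz0] at h3
        simp only [Pi.smul_apply, smul_eq_mul]
        linarith
      by_cases hev : IsEigenvalue (G.lapMatrix ℝ) (lam - n)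
      · rcases SCX (lam - n) hev with h | h
        · left
          intro x hx
          exact h _ (key x hx)
        · right
          intro x hx
          exact h _ (key x hx)
      · left
        intro x hx
        have hw := key x hx
        by_cases h0 : (fun i => x (Sum.inl i)) = (0 : Fin m → ℝ)
        · have hu := congrFun h0 u
          have hv := congrFun h0 v
          simp only [Pi.zero_apply] at hu hv
          rw [hu, hv]
        · exact absurd (⟨_, h0, hw⟩ : IsEigenvalue (G.lapMatrix ℝ) (lam - n)) hev
end

section
/- Let m ≥ 2 and suppose the characteristic polynomial of L_X has integer coefficients. If m + n is odd, then no perfect state transfer occurs in X∨Y between vertices of X: for all distinct u, v ∈ {1,…,m} and all τ ∈ ℝ, |exp(iτL)_{u,v}| ≠ 1. -/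
open Matrix Complex

/- ### auxiliary lemmas -/

/-- eigenvalues are roots of the characteristic polynomial. -/
lemma aux_charpoly_eval_eq_zero {k : ℕ} (M : Matrix (Fin k) (Fin k) ℝ) (t : ℝ)
    (h : ∃ w : Fin k → ℝ, w ≠ 0 ∧ M.mulVec w = t • w) :
    (Matrix.charpoly M).eval t = 0 := by
  obtain ⟨w, hw0, hw⟩ := h
  have hdet : (t • (1 : Matrix (Fin k) (Fin k) ℝ) - M).det = 0 := by
    rw [← Matrix.exists_mulVec_eq_zero_iff]
    refine ⟨w, hw0, ?_⟩
    rw [Matrix.sub_mulVec, Matrix.smul_mulVec, Matrix.one_mulVec, hw, sub_self]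
  have hh : (Matrix.charpoly M).eval t
      = (t • (1 : Matrix (Fin k) (Fin k) ℝ) - M).det := by
    rw [Matrix.charpoly]
    have := (Polynomial.evalRingHom t).map_det (Matrix.charmatrix M)
    rw [show Polynomial.eval t (Matrix.charmatrix M).det
        = (Polynomial.evalRingHom t) (Matrix.charmatrix M).det from rfl, this]
    congr 1
    ext i j
    by_cases hij : i = j
    · subst hij
      simp [Matrix.charmatrix_apply_eq, Matrix.smul_apply, Matrix.one_apply]
    · simp [Matrix.charmatrix_apply_ne _ _ _ hij, Matrix.smul_apply, Matrix.one_apply, hij]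
  rw [hh, hdet]

/-- transfer a real eigenvector equation to the complexification. -/
lemma aux_complexify {N : Type*} [Fintype N] (M : Matrix N N ℝ) (x : N → ℝ) (t : ℝ)
    (h : M.mulVec x = t • x) :
    (M.map (fun r : ℝ => (r : ℂ))).mulVec (fun p => (x p : ℂ))
      = ((t : ℂ)) • (fun p => (x p : ℂ)) := by
  funext p
  have hp := congrFun h p
  simp only [Matrix.mulVec, dotProduct, Pi.smul_apply, smul_eq_mul] at hp ⊢
  simp only [Matrix.map_apply]
  exact_mod_cast hp

theorem stmt13 (m n : ℕ) (hm : 2 ≤ m) (hn : 1 ≤ n)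
    (LX : Matrix (Fin m) (Fin m) ℝ) (LY : Matrix (Fin n) (Fin n) ℝ)
    (hLXsymm : LX.IsSymm) (hLXrow : ∀ i, ∑ j, LX i j = 0)
    (hLXoffdiag : ∀ i j, i ≠ j → LX i j ≤ 0)
    (hLYsymm : LY.IsSymm) (hLYrow : ∀ i, ∑ j, LY i j = 0)
    (hLYoffdiag : ∀ i j, i ≠ j → LY i j ≤ 0)
    (hLXcharpoly : ∀ i, ∃ z : ℤ, (Matrix.charpoly LX).coeff i = (z : ℝ))
    (hodd : Odd (m + n)) :
    ∀ (u v : Fin m), u ≠ v → ∀ τ : ℝ,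
      ‖transU (joinL m n LX LY) τ (Sum.inl u) (Sum.inl v)‖ ≠ 1 := by
  intro u v huv τ hyp
  set A : Matrix (Fin m ⊕ Fin n) (Fin m ⊕ Fin n) ℝ := joinL m n LX LY with hAdef
  -- symmetry of A
  have hAsymm : ∀ p q, A q p = A p q := by
    intro p q
    rcases p with p | p <;> rcases q with q | q <;>
      simp only [hAdef, joinL, Matrix.fromBlocks_apply₁₁, Matrix.fromBlocks_apply₁₂,
        Matrix.fromBlocks_apply₂₁, Matrix.fromBlocks_apply₂₂, Matrix.add_apply,
        Matrix.smul_apply, Matrix.one_apply, Matrix.neg_apply, Matrix.of_apply,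
        smul_eq_mul]
    · rw [hLXsymm.apply p q]
      by_cases hpq : p = q
      · subst hpq; rfl
      · rw [if_neg hpq, if_neg (Ne.symm hpq)]
    · rw [hLYsymm.apply p q]
      by_cases hpq : p = q
      · subst hpq; rfl
      · rw [if_neg hpq, if_neg (Ne.symm hpq)]
  -- row sums of A are zero
  have hrowA : ∀ p, ∑ q, A p q = 0 := by
    intro p
    rcases p with i | i
    · rw [Fintype.sum_sum_type]
      simp only [hAdef, joinL, Matrix.fromBlocks_apply₁₁, Matrix.fromBlocks_apply₁₂,
        Matrix.add_apply, Matrix.smul_apply, Matrix.one_apply, Matrix.neg_apply,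
        Matrix.of_apply, smul_eq_mul]
      rw [Finset.sum_add_distrib, hLXrow i]
      simp [mul_ite, Finset.sum_ite_eq]
    · rw [Fintype.sum_sum_type]
      simp only [hAdef, joinL, Matrix.fromBlocks_apply₂₁, Matrix.fromBlocks_apply₂₂,
        Matrix.add_apply, Matrix.smul_apply, Matrix.one_apply, Matrix.neg_apply,
        Matrix.of_apply, smul_eq_mul]
      rw [Finset.sum_add_distrib, hLYrow i]
      simp [mul_ite, Finset.sum_ite_eq]
  -- the z vector
  have hzA : A.mulVec (Sum.elim (fun _ : Fin m => (n : ℝ)) (fun _ : Fin n => -(m : ℝ)))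
      = ((m + n : ℕ) : ℝ) • (Sum.elim (fun _ : Fin m => (n : ℝ)) (fun _ : Fin n => -(m : ℝ))) := by
    funext p
    rcases p with i | i
    · simp only [Matrix.mulVec, dotProduct, Fintype.sum_sum_type, Sum.elim_inl,
        Sum.elim_inr, Pi.smul_apply, smul_eq_mul]
      simp only [hAdef, joinL, Matrix.fromBlocks_apply₁₁, Matrix.fromBlocks_apply₁₂,
        Matrix.add_apply, Matrix.smul_apply, Matrix.one_apply, Matrix.neg_apply,
        Matrix.of_apply, smul_eq_mul]
      simp only [add_mul, ite_mul, mul_ite, mul_one, mul_zero, one_mul, zero_mul]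
      rw [Finset.sum_add_distrib]
      simp [← Finset.sum_mul, hLXrow i, Finset.sum_ite_eq]
      push_cast
      ring
    · simp only [Matrix.mulVec, dotProduct, Fintype.sum_sum_type, Sum.elim_inl,
        Sum.elim_inr, Pi.smul_apply, smul_eq_mul]
      simp only [hAdef, joinL, Matrix.fromBlocks_apply₂₁, Matrix.fromBlocks_apply₂₂,
        Matrix.add_apply, Matrix.smul_apply, Matrix.one_apply, Matrix.neg_apply,
        Matrix.of_apply, smul_eq_mul]
      simp only [add_mul, ite_mul, mul_ite, mul_one, mul_zero, one_mul, zero_mul]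
      rw [Finset.sum_add_distrib]
      simp [← Finset.sum_mul, hLYrow i, Finset.sum_ite_eq]
      push_cast
      ring
  -- ones vector
  have honesA : A.mulVec (fun _ => (1 : ℝ)) = (0 : ℝ) • (fun _ => (1 : ℝ)) := by
    funext p
    simp only [Matrix.mulVec, dotProduct, mul_one, Pi.smul_apply, smul_eq_mul,
      zero_mul]
    exact hrowA p
  -- complexification
  set A' : Matrix (Fin m ⊕ Fin n) (Fin m ⊕ Fin n) ℂ := A.map (fun x : ℝ => (x : ℂ)) with hA'def
  have hA'herm : A'.IsHermitian := by
    show A'ᴴ = A'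
    ext p q
    simp only [hA'def, Matrix.conjTranspose_apply, Matrix.map_apply, RCLike.star_def,
      Complex.conj_ofReal]
    rw [hAsymm p q]
  set W : Matrix (Fin m ⊕ Fin n) (Fin m ⊕ Fin n) ℂ :=
    (hA'herm.eigenvectorUnitary : Matrix (Fin m ⊕ Fin n) (Fin m ⊕ Fin n) ℂ) with hWdef
  set θ : (Fin m ⊕ Fin n) → ℝ := hA'herm.eigenvalues with hθdef
  have hWsW : star W * W = 1 := Matrix.mem_unitaryGroup_iff'.mp (hA'herm.eigenvectorUnitary).2
  have hWWs : W * star W = 1 := Matrix.mem_unitaryGroup_iff.mp (hA'herm.eigenvectorUnitary).2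
  have hWinv : W⁻¹ = star W := Matrix.inv_eq_left_inv hWsW
  have hWunit : IsUnit W := ⟨⟨W, star W, hWWs, hWsW⟩, rfl⟩
  have hspec : A' = W * Matrix.diagonal (fun i => ((θ i : ℝ) : ℂ)) * star W := by
    convert hA'herm.spectral_theorem using 2
    rw [Unitary.conjStarAlgAut_apply]; rfl
  set dg : (Fin m ⊕ Fin n) → ℂ := fun i => Complex.exp (Complex.I * (τ : ℂ) * (θ i : ℂ))
    with hdgdef
  set E : Matrix (Fin m ⊕ Fin n) (Fin m ⊕ Fin n) ℂ := transU A τ with hEdef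
  have hU : E = W * Matrix.diagonal dg * star W := by
    rw [hEdef, transU, ← hA'def]
    rw [hspec]
    have hsmul : (Complex.I * (τ : ℂ)) • ((W * Matrix.diagonal fun i => ((θ i : ℝ) : ℂ)) * star W)
        = W * ((Complex.I * (τ : ℂ)) • Matrix.diagonal fun i => ((θ i : ℝ) : ℂ)) * star W := by
      rw [Matrix.mul_smul, Matrix.smul_mul]
    rw [hsmul, ← Matrix.diagonal_smul, ← hWinv]
    rw [Matrix.exp_conj W _ hWunit, Matrix.exp_diagonal]
    congr 2
    rw [Pi.exp_def]
    funext i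
    rw [← Complex.exp_eq_exp_ℂ]
    simp [hdgdef]
  have hA'symm : A'ᵀ = A' := by
    ext p q
    simp only [Matrix.transpose_apply, hA'def, Matrix.map_apply]
    rw [hAsymm p q]
  have hEsymm : ∀ p q, E q p = E p q := by
    intro p q
    have h1 : Eᵀ = E := by
      rw [hEdef, transU, ← hA'def, ← Matrix.exp_transpose, Matrix.transpose_smul, hA'symm]
    have := congrFun (congrFun h1 p) q
    rwa [Matrix.transpose_apply] at this
  have hXstar : star ((Complex.I * (τ : ℂ)) • A') = -((Complex.I * (τ : ℂ)) • A') := by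
    rw [star_smul, Matrix.star_eq_conjTranspose, hA'herm.eq, ← neg_smul]
    congr 1
    simp [Complex.conj_ofReal]
  have hstarE_E : star E * E = 1 := by
    rw [hEdef, transU, ← hA'def]
    have h1 : star (NormedSpace.exp ((Complex.I * (τ : ℂ)) • A'))
        = NormedSpace.exp (-((Complex.I * (τ : ℂ)) • A')) := by
      rw [Matrix.star_eq_conjTranspose, ← Matrix.exp_conjTranspose,
        ← Matrix.star_eq_conjTranspose, hXstar]
    rw [h1, ← Matrix.exp_add_of_commute (-((Complex.I * (τ : ℂ)) • A')) ((Complex.I * (τ : ℂ)) • A') (Commute.neg_left (Commute.refl _)),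
      neg_add_cancel, NormedSpace.exp_zero]
  -- eigenvector property of E
  have heig : ∀ (x : (Fin m ⊕ Fin n) → ℂ) (t : ℝ), A'.mulVec x = (t : ℂ) • x →
      E.mulVec x = Complex.exp (Complex.I * (τ : ℂ) * (t : ℂ)) • x := by
    intro x t hx
    have hy : Matrix.diagonal (fun i => ((θ i : ℝ) : ℂ)) *ᵥ (star W *ᵥ x)
        = (t : ℂ) • (star W *ᵥ x) := by
      have h2 := congrArg (fun z => star W *ᵥ z) hx
      rw [Matrix.mulVec_smul] at h2
      rw [hspec] at h2
      rw [Matrix.mulVec_mulVec, ← Matrix.mul_assoc, ← Matrix.mul_assoc, hWsW,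
        Matrix.one_mul, ← Matrix.mulVec_mulVec] at h2
      exact h2
    have hdy : ∀ i, dg i * (star W *ᵥ x) i
        = Complex.exp (Complex.I * (τ : ℂ) * (t : ℂ)) * (star W *ᵥ x) i := by
      intro i
      have h3 := congrFun hy i
      rw [Matrix.mulVec_diagonal] at h3
      simp only [Pi.smul_apply, smul_eq_mul] at h3
      by_cases h0 : (star W *ᵥ x) i = 0
      · rw [h0, mul_zero, mul_zero]
      · have h4 : ((θ i : ℝ) : ℂ) = (t : ℂ) := mul_right_cancel₀ h0 h3
        have h5 : θ i = t := by exact_mod_cast h4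
        rw [hdgdef]
        simp only
        rw [h5]
    calc E *ᵥ x = W *ᵥ (Matrix.diagonal dg *ᵥ (star W *ᵥ x)) := by
          rw [hU, Matrix.mulVec_mulVec, Matrix.mulVec_mulVec, Matrix.mul_assoc]
      _ = W *ᵥ (Complex.exp (Complex.I * (τ : ℂ) * (t : ℂ)) • (star W *ᵥ x)) := by
          have hinner : Matrix.diagonal dg *ᵥ (star W *ᵥ x)
              = Complex.exp (Complex.I * (τ : ℂ) * (t : ℂ)) • (star W *ᵥ x) := by
            funext i
            rw [Matrix.mulVec_diagonal, hdy i]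
            simp
          rw [hinner]
      _ = Complex.exp (Complex.I * (τ : ℂ) * (t : ℂ)) • (W *ᵥ (star W *ᵥ x)) := by
          rw [Matrix.mulVec_smul]
      _ = Complex.exp (Complex.I * (τ : ℂ) * (t : ℂ)) • x := by
          rw [Matrix.mulVec_mulVec, hWWs, Matrix.one_mulVec]
  -- columns of E
  have hcol : ∀ q r : Fin m ⊕ Fin n, ‖E q r‖ = 1 →
      ∀ w, E w r = if w = q then E q r else 0 := by
    intro q r habs w
    have hsum : ∑ p, Complex.normSq (E p r) = 1 := by
      have h1 := congrFun (congrFun hstarE_E r) r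
      rw [Matrix.mul_apply, Matrix.one_apply_eq] at h1
      have h2 : ((∑ p, Complex.normSq (E p r) : ℝ) : ℂ) = 1 := by
        push_cast
        rw [← h1]
        refine Finset.sum_congr rfl fun p _ => ?_
        rw [Matrix.star_eq_conjTranspose, Matrix.conjTranspose_apply,
          Complex.normSq_eq_conj_mul_self]
        rfl
      exact_mod_cast h2
    have hq : Complex.normSq (E q r) = 1 := by
      rw [← Complex.sq_norm, habs, one_pow]
    by_cases hw : w = q
    · rw [if_pos hw, hw]
    · rw [if_neg hw]
      have h5 : Complex.normSq (E q r) + ∑ p ∈ Finset.univ.erase q, Complex.normSq (E p r)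
          = ∑ p, Complex.normSq (E p r) :=
        Finset.add_sum_erase Finset.univ (fun p => Complex.normSq (E p r)) (Finset.mem_univ q)
      rw [hsum, hq] at h5
      have h4 : ∑ p ∈ Finset.univ.erase q, Complex.normSq (E p r) = 0 := by linarith
      have h6 := (Finset.sum_eq_zero_iff_of_nonneg
        (fun p _ => Complex.normSq_nonneg (E p r))).mp h4 w
        (Finset.mem_erase.mpr ⟨hw, Finset.mem_univ w⟩)
      exact Complex.normSq_eq_zero.mp h6
  set γ : ℂ := E (Sum.inl u) (Sum.inl v) with hγdef
  have hcolv : ∀ w, E w (Sum.inl v) = if w = Sum.inl u then γ else 0 := hcol _ _ hyp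
  have hEvu : E (Sum.inl v) (Sum.inl u) = γ := hEsymm (Sum.inl u) (Sum.inl v)
  have hcolu : ∀ w, E w (Sum.inl u) = if w = Sum.inl v then γ else 0 := by
    intro w
    have h7 := hcol (Sum.inl v) (Sum.inl u) (by rw [hEvu]; exact hyp) w
    rw [hEvu] at h7
    exact h7
  -- gamma = 1
  have honesE := heig (fun p => ((1 : ℝ) : ℂ)) 0
    (by
      have := aux_complexify A (fun _ => (1 : ℝ)) 0 honesA
      rw [← hA'def] at this
      exact this)
  have hγ1 : γ = 1 := by
    have h7 : ∑ w, E w (Sum.inl v) = γ := by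
      rw [Finset.sum_congr rfl fun w _ => hcolv w]
      simp
    have h8 : ∑ w, E (Sum.inl v) w = 1 := by
      have h9 := congrFun honesE (Sum.inl v)
      simp only [Matrix.mulVec, dotProduct, Pi.smul_apply, smul_eq_mul,
        Complex.ofReal_one, mul_one, Complex.ofReal_zero, mul_zero,
        Complex.exp_zero] at h9
      exact h9
    calc γ = ∑ w, E w (Sum.inl v) := h7.symm
      _ = ∑ w, E (Sum.inl v) w := Finset.sum_congr rfl fun w _ => (hEsymm w (Sum.inl v)).symm
      _ = 1 := h8
  -- exp(I tau (m+n)) = 1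
  have hzE := heig (fun p => ((Sum.elim (fun _ : Fin m => (n : ℝ))
      (fun _ : Fin n => -(m : ℝ)) p : ℝ) : ℂ)) ((m + n : ℕ) : ℝ)
    (by
      have := aux_complexify A (Sum.elim (fun _ : Fin m => (n : ℝ))
        (fun _ : Fin n => -(m : ℝ))) ((m + n : ℕ) : ℝ) hzA
      rw [← hA'def] at this
      exact this)
  have hexpmn : Complex.exp (Complex.I * (τ : ℂ) * (((m + n : ℕ) : ℝ) : ℂ)) = 1 := by
    have h9 := congrFun hzE (Sum.inl v)
    simp only [Matrix.mulVec, dotProduct, Pi.smul_apply, smul_eq_mul] at h9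
    rw [Finset.sum_congr rfl fun w _ => by rw [hEsymm w (Sum.inl v), hcolv w]] at h9
    simp only [ite_mul, zero_mul, Finset.sum_ite_eq', Finset.mem_univ, if_true,
      Sum.elim_inl, hγ1, one_mul] at h9
    have hn0 : ((n : ℝ) : ℂ) ≠ 0 := by
      simp only [ne_eq, Complex.ofReal_natCast, Nat.cast_eq_zero]
      omega
    have h10 : Complex.exp (Complex.I * (τ : ℂ) * (((m + n : ℕ) : ℝ) : ℂ)) * ((n : ℝ) : ℂ)
        = 1 * ((n : ℝ) : ℂ) := by
      rw [one_mul, ← h9]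
    exact mul_right_cancel₀ hn0 h10
  -- the key relations between rows u and v of W
  have hkey : star W * E = Matrix.diagonal dg * star W := by
    rw [hU, ← Matrix.mul_assoc, ← Matrix.mul_assoc, hWsW, Matrix.one_mul]
  have hrel1 : ∀ j, dg j * star (W (Sum.inl v) j) = γ * star (W (Sum.inl u) j) := by
    intro j
    have h1 := congrFun (congrFun hkey j) (Sum.inl v)
    rw [Matrix.mul_apply, Matrix.mul_apply] at h1
    rw [Finset.sum_congr rfl fun w _ => by
      rw [Matrix.star_eq_conjTranspose, Matrix.conjTranspose_apply, hcolv w]] at h1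
    simp only [mul_ite, mul_zero, Finset.sum_ite_eq', Finset.mem_univ, if_true] at h1
    rw [Finset.sum_congr rfl fun w _ => by
      rw [show Matrix.diagonal dg j w * (star W) w (Sum.inl v)
          = (if w = j then dg j * (star W) w (Sum.inl v) else 0) from by
        by_cases hwj : w = j
        · subst hwj; rw [if_pos rfl, Matrix.diagonal_apply_eq]
        · rw [Matrix.diagonal_apply_ne' _ hwj, zero_mul, if_neg hwj]]] at h1
    simp only [Finset.sum_ite_eq', Finset.mem_univ, if_true] at h1
    rw [Matrix.star_eq_conjTranspose, Matrix.conjTranspose_apply] at h1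
    rw [← h1]
    ring
  have hrel2 : ∀ j, dg j * star (W (Sum.inl u) j) = γ * star (W (Sum.inl v) j) := by
    intro j
    have h1 := congrFun (congrFun hkey j) (Sum.inl u)
    rw [Matrix.mul_apply, Matrix.mul_apply] at h1
    rw [Finset.sum_congr rfl fun w _ => by
      rw [Matrix.star_eq_conjTranspose, Matrix.conjTranspose_apply, hcolu w]] at h1
    simp only [mul_ite, mul_zero, Finset.sum_ite_eq', Finset.mem_univ, if_true] at h1
    rw [Finset.sum_congr rfl fun w _ => by
      rw [show Matrix.diagonal dg j w * (star W) w (Sum.inl u)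
          = (if w = j then dg j * (star W) w (Sum.inl u) else 0) from by
        by_cases hwj : w = j
        · subst hwj; rw [if_pos rfl, Matrix.diagonal_apply_eq]
        · rw [Matrix.diagonal_apply_ne' _ hwj, zero_mul, if_neg hwj]]] at h1
    simp only [Finset.sum_ite_eq', Finset.mem_univ, if_true] at h1
    rw [Matrix.star_eq_conjTranspose, Matrix.conjTranspose_apply] at h1
    rw [← h1]
    ring
  -- orthogonality of rows u and v of W
  have horth : ∑ j, W (Sum.inl u) j * star (W (Sum.inl v) j) = 0 := by
    have h1 := congrFun (congrFun hWWs (Sum.inl u)) (Sum.inl v)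
    rw [Matrix.mul_apply, Matrix.one_apply, if_neg (by simp [huv])] at h1
    rw [← h1]
    refine Finset.sum_congr rfl fun j _ => ?_
    rw [Matrix.star_eq_conjTranspose, Matrix.conjTranspose_apply]
  have hnormu : ∑ j, W (Sum.inl u) j * star (W (Sum.inl u) j) = 1 := by
    have h1 := congrFun (congrFun hWWs (Sum.inl u)) (Sum.inl u)
    rw [Matrix.mul_apply, Matrix.one_apply_eq] at h1
    rw [← h1]
    refine Finset.sum_congr rfl fun j _ => ?_
    rw [Matrix.star_eq_conjTranspose, Matrix.conjTranspose_apply]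
  -- existence of a sign-flipping eigenvector with nonzero u entry
  obtain ⟨j₀, hj₀u, hj₀dg⟩ : ∃ j, W (Sum.inl u) j ≠ 0 ∧ dg j = -1 := by
    by_contra hcon
    push_neg at hcon
    have hall : ∀ j, star (W (Sum.inl v) j) = star (W (Sum.inl u) j) := by
      intro j
      by_cases h0 : W (Sum.inl u) j = 0
      · have h2 := hrel2 j
        rw [h0, hγ1, one_mul] at h2
        simp only [star_zero, mul_zero] at h2
        rw [h0, ← h2]
        simp
      · have hdg2 : dg j * dg j = 1 := by
          have h2 := hrel2 j
          have h3 := hrel1 j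
          rw [hγ1, one_mul] at h2 h3
          have h4 : dg j * (dg j * star (W (Sum.inl u) j)) = star (W (Sum.inl u) j) := by
            rw [h2, h3]
          have h5 : (dg j * dg j) * star (W (Sum.inl u) j) = 1 * star (W (Sum.inl u) j) := by
            rw [one_mul, mul_assoc]
            exact h4
          exact mul_right_cancel₀ (by simpa using h0) h5
        rcases mul_self_eq_one_iff.mp hdg2 with h6 | h6
        · have h2 := hrel1 j
          rw [hγ1, one_mul, h6, one_mul] at h2
          exact h2
        · exact absurd h6 (hcon j h0)
    have : (0 : ℂ) = 1 := by
      rw [← horth, ← hnormu]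
      exact Finset.sum_congr rfl fun j _ => by rw [hall j]
    simp at this
  have hj₀v : W (Sum.inl v) j₀ = -W (Sum.inl u) j₀ := by
    have h2 := hrel1 j₀
    rw [hγ1, one_mul, hj₀dg] at h2
    have h3 : star (W (Sum.inl v) j₀) = -star (W (Sum.inl u) j₀) := by
      linear_combination -h2
    have h4 := congrArg star h3
    simpa using h4
  -- the eigenvector column j₀ of W
  have hcolEig : A'.mulVec (fun w => W w j₀) = ((θ j₀ : ℝ) : ℂ) • (fun w => W w j₀) := by
    have hAW : A' * W = W * Matrix.diagonal (fun i => ((θ i : ℝ) : ℂ)) := by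
      rw [hspec, Matrix.mul_assoc (W * Matrix.diagonal fun i => ((θ i : ℝ) : ℂ)) (star W) W,
        hWsW, Matrix.mul_one]
    funext w
    have h1 := congrFun (congrFun hAW w) j₀
    rw [Matrix.mul_apply, Matrix.mul_diagonal] at h1
    simp only [Matrix.mulVec, dotProduct, Pi.smul_apply, smul_eq_mul]
    rw [h1]
    ring
  -- extract a real eigenvector of A with the sign flip
  obtain ⟨y, hyEig, hyu, hyv⟩ : ∃ y : (Fin m ⊕ Fin n) → ℝ,
      A.mulVec y = (θ j₀) • y ∧ y (Sum.inl u) ≠ 0 ∧ y (Sum.inl v) = -y (Sum.inl u) := by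
    have hre : A.mulVec (fun w => (W w j₀).re) = (θ j₀) • (fun w => (W w j₀).re) := by
      funext p
      have h1 := congrArg Complex.re (congrFun hcolEig p)
      simp only [Matrix.mulVec, dotProduct, Pi.smul_apply, smul_eq_mul,
        hA'def, Matrix.map_apply] at h1 ⊢
      rw [Complex.re_sum] at h1
      simp only [Complex.mul_re, Complex.ofReal_re, Complex.ofReal_im, zero_mul,
        sub_zero] at h1
      exact h1
    have him : A.mulVec (fun w => (W w j₀).im) = (θ j₀) • (fun w => (W w j₀).im) := by
      funext p
      have h1 := congrArg Complex.im (congrFun hcolEig p)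
      simp only [Matrix.mulVec, dotProduct, Pi.smul_apply, smul_eq_mul,
        hA'def, Matrix.map_apply] at h1 ⊢
      rw [Complex.im_sum] at h1
      simp only [Complex.mul_im, Complex.ofReal_re, Complex.ofReal_im, zero_mul,
        add_zero] at h1
      exact h1
    by_cases hre0 : (W (Sum.inl u) j₀).re ≠ 0
    · refine ⟨fun w => (W w j₀).re, hre, hre0, ?_⟩
      show (W (Sum.inl v) j₀).re = -(W (Sum.inl u) j₀).re
      rw [hj₀v]
      simp
    · push_neg at hre0
      have him0 : (W (Sum.inl u) j₀).im ≠ 0 := by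
        intro h0
        exact hj₀u (Complex.ext hre0 h0)
      refine ⟨fun w => (W w j₀).im, him, him0, ?_⟩
      show (W (Sum.inl v) j₀).im = -(W (Sum.inl u) j₀).im
      rw [hj₀v]
      simp
  -- row equations for the X block
  have hrowEq : ∀ i, ∑ j, LX i j * y (Sum.inl j) + (n : ℝ) * y (Sum.inl i)
      - (∑ k, y (Sum.inr k)) = θ j₀ * y (Sum.inl i) := by
    intro i
    have h1 := congrFun hyEig (Sum.inl i)
    simp only [Matrix.mulVec, dotProduct, Pi.smul_apply, smul_eq_mul,
      Fintype.sum_sum_type] at h1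
    simp only [hAdef, joinL, Matrix.fromBlocks_apply₁₁, Matrix.fromBlocks_apply₁₂,
      Matrix.add_apply, Matrix.smul_apply, Matrix.one_apply, Matrix.neg_apply,
      Matrix.of_apply, smul_eq_mul] at h1
    simp only [add_mul, mul_ite, mul_one, mul_zero, ite_mul, zero_mul, neg_mul,
      one_mul] at h1
    rw [Finset.sum_add_distrib, Finset.sum_ite_eq, Finset.sum_neg_distrib] at h1
    simp only [Finset.mem_univ, if_true] at h1
    linarith [h1]
  have hcolsum : ∀ j, ∑ i, LX i j = 0 := by
    intro j
    rw [Finset.sum_congr rfl fun i _ => hLXsymm.apply j i]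
    exact hLXrow j
  have hS : (n : ℝ) * (∑ k, y (Sum.inl k)) - (m : ℝ) * (∑ k, y (Sum.inr k))
      = θ j₀ * (∑ k, y (Sum.inl k)) := by
    have h2 : ∑ i, (∑ j, LX i j * y (Sum.inl j) + (n : ℝ) * y (Sum.inl i)
        - (∑ k, y (Sum.inr k))) = ∑ i, θ j₀ * y (Sum.inl i) :=
      Finset.sum_congr rfl fun i _ => hrowEq i
    have h4 : ∑ i, ∑ j, LX i j * y (Sum.inl j) = 0 := by
      rw [Finset.sum_comm]
      refine Finset.sum_eq_zero fun j _ => ?_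
      rw [← Finset.sum_mul, hcolsum j, zero_mul]
    rw [Finset.sum_sub_distrib, Finset.sum_add_distrib, h4, zero_add, ← Finset.mul_sum,
      ← Finset.mul_sum, Finset.sum_const, Finset.card_univ, Fintype.card_fin,
      nsmul_eq_mul] at h2
    linarith [h2]
  -- an eigenvector of LX for the eigenvalue θ j₀ - n
  have hLXeigvec : ∃ w : Fin m → ℝ, w ≠ 0 ∧ LX.mulVec w = (θ j₀ - n) • w := by
    refine ⟨fun i => (m : ℝ) * y (Sum.inl i) - ∑ k, y (Sum.inl k), ?_, ?_⟩
    · intro h0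
      have h1 := congrFun h0 u
      have h2 := congrFun h0 v
      simp only [Pi.zero_apply] at h1 h2
      have hm0 : (m : ℝ) ≠ 0 := Nat.cast_ne_zero.mpr (by omega)
      have h3 : (m : ℝ) * y (Sum.inl u) = (m : ℝ) * y (Sum.inl v) := by linarith
      have h4 : y (Sum.inl u) = y (Sum.inl v) := mul_left_cancel₀ hm0 h3
      rw [hyv] at h4
      have h5 : y (Sum.inl u) = 0 := by linarith
      exact hyu h5
    · funext i
      simp only [Matrix.mulVec, dotProduct, Pi.smul_apply, smul_eq_mul]
      have hexp : ∑ j, LX i j * ((m : ℝ) * y (Sum.inl j) - ∑ k, y (Sum.inl k))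
          = (m : ℝ) * (∑ j, LX i j * y (Sum.inl j))
            - (∑ j, LX i j) * (∑ k, y (Sum.inl k)) := by
        calc ∑ j, LX i j * ((m : ℝ) * y (Sum.inl j) - ∑ k, y (Sum.inl k))
            = ∑ j, ((m : ℝ) * (LX i j * y (Sum.inl j))
              - LX i j * (∑ k, y (Sum.inl k))) :=
              Finset.sum_congr rfl fun j _ => by ring
          _ = (∑ j, (m : ℝ) * (LX i j * y (Sum.inl j)))
              - ∑ j, LX i j * (∑ k, y (Sum.inl k)) := Finset.sum_sub_distrib _ _
          _ = (m : ℝ) * (∑ j, LX i j * y (Sum.inl j))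
              - (∑ j, LX i j) * (∑ k, y (Sum.inl k)) := by
              rw [← Finset.mul_sum, ← Finset.sum_mul]
      rw [hexp, hLXrow i, zero_mul, sub_zero]
      have h1 := hrowEq i
      linear_combination (m : ℝ) * h1 - hS
  -- θ j₀ - n is a root of the characteristic polynomial of LX
  have hroot : (Matrix.charpoly LX).eval (θ j₀ - n) = 0 :=
    aux_charpoly_eval_eq_zero LX (θ j₀ - n) hLXeigvec
  -- integer relations from the exponentials
  obtain ⟨k2, hk2⟩ := Complex.exp_eq_one_iff.mp hexpmn
  have hdgj : Complex.exp (Complex.I * (τ : ℂ) * ((θ j₀ : ℝ) : ℂ)) = -1 := by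
    rw [hdgdef] at hj₀dg
    exact hj₀dg
  have hsq : Complex.exp ((Complex.I * (τ : ℂ) * ((θ j₀ : ℝ) : ℂ))
      + (Complex.I * (τ : ℂ) * ((θ j₀ : ℝ) : ℂ))) = 1 := by
    rw [Complex.exp_add, hdgj]
    ring
  obtain ⟨k1, hk1⟩ := Complex.exp_eq_one_iff.mp hsq
  have hre1 : τ * ((m + n : ℕ) : ℝ) = (k2 : ℝ) * (2 * Real.pi) := by
    have h1 := congrArg Complex.im hk2
    simp only [Complex.mul_im, Complex.mul_re, Complex.I_re, Complex.I_im,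
      Complex.ofReal_re, Complex.ofReal_im, Complex.intCast_re, Complex.intCast_im,
      Complex.re_ofNat, Complex.im_ofNat] at h1
    ring_nf at h1 ⊢
    linarith [h1]
  have hre2' : τ * θ j₀ = (k1 : ℝ) * Real.pi := by
    have h1 := congrArg Complex.im hk1
    simp only [Complex.add_im, Complex.mul_im, Complex.mul_re, Complex.I_re, Complex.I_im,
      Complex.ofReal_re, Complex.ofReal_im, Complex.intCast_re, Complex.intCast_im,
      Complex.re_ofNat, Complex.im_ofNat] at h1
    ring_nf at h1 ⊢
    linarith [h1]
  have hk1odd : Odd k1 := by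
    by_contra hk1e
    rw [Int.not_odd_iff_even] at hk1e
    have hIt : Complex.I * (τ : ℂ) * ((θ j₀ : ℝ) : ℂ)
        = (k1 : ℂ) * ((Real.pi : ℂ) * Complex.I) := by
      have hc : ((τ * θ j₀ : ℝ) : ℂ) = (((k1 : ℝ) * Real.pi : ℝ) : ℂ) := by
        exact_mod_cast congrArg (fun r : ℝ => (r : ℂ)) hre2'
      push_cast at hc
      calc Complex.I * (τ : ℂ) * ((θ j₀ : ℝ) : ℂ)
          = ((τ : ℂ) * ((θ j₀ : ℝ) : ℂ)) * Complex.I := by ring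
        _ = ((k1 : ℂ) * (Real.pi : ℂ)) * Complex.I := by rw [hc]
        _ = (k1 : ℂ) * ((Real.pi : ℂ) * Complex.I) := by ring
    have h2 : Complex.exp (Complex.I * (τ : ℂ) * ((θ j₀ : ℝ) : ℂ)) = 1 := by
      rw [hIt, Complex.exp_int_mul, Complex.exp_pi_mul_I]
      exact hk1e.neg_one_zpow
    rw [hdgj] at h2
    exact absurd h2 (by norm_num)
  have hmn0 : (0 : ℝ) < ((m + n : ℕ) : ℝ) := by
    have : 0 < m + n := by omega
    exact_mod_cast this
  have hkey2 : θ j₀ * (2 * (k2 : ℝ)) = (k1 : ℝ) * ((m + n : ℕ) : ℝ) := by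
    have h1 : θ j₀ * (τ * ((m + n : ℕ) : ℝ)) = ((m + n : ℕ) : ℝ) * (τ * θ j₀) := by ring
    rw [hre1, hre2'] at h1
    have h2 : (θ j₀ * (2 * (k2 : ℝ))) * Real.pi
        = ((k1 : ℝ) * ((m + n : ℕ) : ℝ)) * Real.pi := by linear_combination h1
    exact mul_right_cancel₀ Real.pi_ne_zero h2
  have hk2ne : (k2 : ℝ) ≠ 0 := by
    intro h0
    have h1 : (k1 : ℝ) * ((m + n : ℕ) : ℝ) = 0 := by
      rw [← hkey2, h0]
      ring
    rcases mul_eq_zero.mp h1 with h | h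
    · have hk10 : k1 = 0 := by exact_mod_cast h
      rw [hk10] at hk1odd
      exact (Int.not_odd_iff_even.mpr Even.zero) hk1odd
    · exact absurd h (ne_of_gt hmn0)
  have h2k2 : (2 * (k2 : ℝ)) ≠ 0 := by
    intro h0
    apply hk2ne
    linarith
  -- the rational number equal to θ j₀ - n
  set q0 : ℚ := ((k1 : ℚ) * ((m + n : ℕ) : ℚ)) / (2 * (k2 : ℚ)) - (n : ℚ) with hq0def
  have hq0R : ((q0 : ℚ) : ℝ) = θ j₀ - (n : ℝ) := by
    rw [hq0def]
    push_cast
    have hdiv : ((k1 : ℝ) * ((m : ℝ) + (n : ℝ))) / (2 * (k2 : ℝ)) = θ j₀ := by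
      rw [div_eq_iff h2k2]
      have := hkey2
      push_cast at this
      linear_combination -this
    rw [hdiv]
  -- integer polynomial with the same coefficients as charpoly LX
  classical
  set pZ : Polynomial ℤ :=
    ∑ i ∈ Finset.range (m + 1), Polynomial.monomial i ((hLXcharpoly i).choose) with hpZdef
  have hdeg : (Matrix.charpoly LX).natDegree = m := by
    rw [Matrix.charpoly_natDegree_eq_dim]
    exact Fintype.card_fin m
  have hpZcoeff : ∀ k, ((pZ.coeff k : ℤ) : ℝ) = (Matrix.charpoly LX).coeff k := by
    intro k
    rw [hpZdef, Polynomial.finset_sum_coeff]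
    simp only [Polynomial.coeff_monomial]
    rw [Finset.sum_ite_eq' (Finset.range (m + 1)) k fun i => (hLXcharpoly i).choose]
    by_cases hk : k ≤ m
    · rw [if_pos (Finset.mem_range.mpr (by omega))]
      exact ((hLXcharpoly k).choose_spec).symm
    · rw [if_neg (by simp only [Finset.mem_range]; omega)]
      rw [Polynomial.coeff_eq_zero_of_natDegree_lt (by rw [hdeg]; omega)]
      simp
  have hmap : pZ.map (Int.castRingHom ℝ) = Matrix.charpoly LX := by
    ext k
    rw [Polynomial.coeff_map]
    exact hpZcoeff k
  have hmonic : pZ.Monic :=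
    Polynomial.monic_of_injective (f := Int.castRingHom ℝ) Int.cast_injective
      (by rw [hmap]; exact LX.charpoly_monic)
  have haev : Polynomial.eval₂ (algebraMap ℤ ℚ) q0 pZ = 0 := by
    have hinj : Function.Injective (algebraMap ℚ ℝ) := (algebraMap ℚ ℝ).injective
    apply hinj
    rw [Polynomial.hom_eval₂]
    have hcomp : (algebraMap ℚ ℝ).comp (algebraMap ℤ ℚ) = Int.castRingHom ℝ := by
      ext x
      simp
    rw [hcomp]
    rw [show Polynomial.eval₂ (Int.castRingHom ℝ) ((algebraMap ℚ ℝ) q0) pZ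
        = (pZ.map (Int.castRingHom ℝ)).eval ((algebraMap ℚ ℝ) q0) from
      (Polynomial.eval_map _ _).symm]
    rw [hmap]
    rw [show (algebraMap ℚ ℝ) q0 = ((q0 : ℚ) : ℝ) from rfl, hq0R]
    rw [hroot]
    simp
  have hint : IsIntegral ℤ q0 := ⟨pZ, hmonic, haev⟩
  obtain ⟨d, hd⟩ := IsIntegrallyClosed.isIntegral_iff.mp hint
  have hdq : ((d : ℚ) : ℝ) = θ j₀ - (n : ℝ) := by
    rw [show ((d : ℚ)) = q0 from by exact_mod_cast hd, hq0R]
  have ht0int : θ j₀ = ((d + (n : ℤ) : ℤ) : ℝ) := by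
    push_cast at hdq ⊢
    linarith
  have hZeq : ((d + (n : ℤ)) * (2 * k2) : ℤ) = (k1 * ((m + n : ℕ) : ℤ) : ℤ) := by
    have h1 := hkey2
    rw [ht0int] at h1
    exact_mod_cast h1
  have hEvenL : Even ((d + (n : ℤ)) * (2 * k2)) := ⟨(d + (n : ℤ)) * k2, by ring⟩
  have hOddR : Odd (k1 * ((m + n : ℕ) : ℤ)) := hk1odd.mul ((Int.odd_coe_nat (m+n)).mpr hodd)
  rw [hZeq] at hEvenL
  exact (Int.not_odd_iff_even.mpr hEvenL) hOddR
end

section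
/- Let m ≥ 2, let k, ℓ be integers, and suppose the characteristic polynomial of A_X has integer coefficients. If k + ℓ is odd, then no adjacency perfect state transfer occurs in X∨Y between vertices of X: for all distinct u, v ∈ {1,…,m} and all τ ∈ ℝ, |exp(iτA)_{u,v}| ≠ 1. -/
open Matrix Complex

theorem exp_mulVec_eigen {N : Type*} [Fintype N] [DecidableEq N]
    (M : Matrix N N ℂ) (x : N → ℂ) (c : ℂ) (h : M *ᵥ x = c • x) :
    NormedSpace.exp M *ᵥ x = Complex.exp c • x := by
  letI : SeminormedRing (Matrix N N ℂ) := Matrix.linftyOpSemiNormedRing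
  letI : NormedRing (Matrix N N ℂ) := Matrix.linftyOpNormedRing
  letI : NormedAlgebra ℂ (Matrix N N ℂ) := Matrix.linftyOpNormedAlgebra
  have hpow : ∀ j : ℕ, M ^ j *ᵥ x = c ^ j • x := by
    intro j
    induction j with
    | zero => simp
    | succ j ih =>
      rw [pow_succ, pow_succ, ← Matrix.mulVec_mulVec, h, Matrix.mulVec_smul, ih,
        smul_smul]
      rw [mul_comm]
  have hL : ∃ L : Matrix N N ℂ →L[ℂ] (N → ℂ), ∀ B, L B = B *ᵥ x := by
    refine ⟨LinearMap.toContinuousLinearMap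
      { toFun := fun B => B *ᵥ x
        map_add' := fun B C => Matrix.add_mulVec B C x
        map_smul' := fun a B => Matrix.smul_mulVec a B x }, fun B => rfl⟩
  obtain ⟨L, hLapp⟩ := hL
  have hsum : Summable fun j : ℕ => ((j.factorial : ℂ))⁻¹ • M ^ j :=
    NormedSpace.expSeries_summable' (𝕂 := ℂ) M
  have hsum2 : Summable fun j : ℕ => ((j.factorial : ℂ))⁻¹ • c ^ j :=
    NormedSpace.expSeries_summable' (𝕂 := ℂ) c
  calc NormedSpace.exp M *ᵥ x = L (∑' j : ℕ, ((j.factorial : ℂ))⁻¹ • M ^ j) := by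
        rw [hLapp, NormedSpace.exp_eq_tsum ℂ]
    _ = ∑' j : ℕ, L (((j.factorial : ℂ))⁻¹ • M ^ j) := L.map_tsum hsum
    _ = ∑' j : ℕ, (((j.factorial : ℂ))⁻¹ • c ^ j) • x := by
        refine tsum_congr fun j => ?_
        rw [hLapp, Matrix.smul_mulVec, hpow, smul_smul, smul_eq_mul]
    _ = (∑' j : ℕ, ((j.factorial : ℂ))⁻¹ • c ^ j) • x := by
        exact hsum2.tsum_smul_const x
    _ = Complex.exp c • x := by
        have h2 := congrFun (NormedSpace.exp_eq_tsum (𝕂 := ℂ) (𝔸 := ℂ)) c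
        rw [← h2, Complex.exp_eq_exp_ℂ]

theorem exp_I_mul_eq_one {s : ℝ} (h : Complex.exp (Complex.I * (s : ℂ)) = 1) :
    ∃ a : ℤ, s = 2 * Real.pi * a := by
  obtain ⟨a, ha⟩ := Complex.exp_eq_one_iff.mp h
  refine ⟨a, ?_⟩
  have h2 : Complex.I * (s : ℂ) = Complex.I * ((2 * Real.pi * a : ℝ) : ℂ) := by
    rw [ha]; push_cast; ring
  have h3 := mul_left_cancel₀ Complex.I_ne_zero h2
  exact_mod_cast h3

theorem exp_I_mul_eq_neg_one {s : ℝ} (h : Complex.exp (Complex.I * (s : ℂ)) = -1) :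
    ∃ a : ℤ, s = 2 * Real.pi * a + Real.pi := by
  have h1 : Complex.exp (Complex.I * ((s - Real.pi : ℝ) : ℂ)) = 1 := by
    have : Complex.I * ((s - Real.pi : ℝ) : ℂ)
        = Complex.I * (s : ℂ) - (Real.pi : ℂ) * Complex.I := by push_cast; ring
    rw [this, Complex.exp_sub, h, Complex.exp_pi_mul_I]
    norm_num
  obtain ⟨a, ha⟩ := exp_I_mul_eq_one h1
  exact ⟨a, by linarith⟩

theorem exists_eigvec_inner_ne_zero {m : ℕ} (B : Matrix (Fin m) (Fin m) ℝ)
    (hB : B.IsSymm) (z : Fin m → ℝ) (hz : z ≠ 0) :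
    ∃ (μ : ℝ) (w : Fin m → ℝ), B *ᵥ w = μ • w ∧ ∑ i, w i * z i ≠ 0 := by
  have hherm : B.IsHermitian := by
    rwa [Matrix.IsHermitian, Matrix.conjTranspose_eq_transpose_of_trivial]
  by_contra hcon
  push_neg at hcon
  set b := hherm.eigenvectorBasis with hb
  have hz' : ∀ j, ∑ i, (b j) i * z i = 0 := fun j =>
    hcon (hherm.eigenvalues j) (b j) (hherm.mulVec_eigenvectorBasis j)
  set z' : EuclideanSpace ℝ (Fin m) := WithLp.toLp 2 z with hz'def
  have hrep : ∀ j, b.repr z' j = 0 := by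
    intro j
    rw [b.repr_apply_apply]
    simpa [PiLp.inner_apply, RCLike.inner_apply, conj_trivial, hz'def, mul_comm] using hz' j
  have : z' = 0 := by
    have : b.repr z' = 0 := by ext j; exact hrep j
    simpa using congrArg b.repr.symm this
  exact hz (funext fun i => by simpa [hz'def] using congrArg (fun y : EuclideanSpace ℝ (Fin m) => y i) this)

theorem isIntegral_of_eig {m : ℕ} (AX : Matrix (Fin m) (Fin m) ℝ)
    (hAXcharpoly : ∀ i, ∃ z : ℤ, (Matrix.charpoly AX).coeff i = (z : ℝ))
    (lam : ℝ) (x : Fin m → ℝ) (hx : x ≠ 0) (heig : AX *ᵥ x = lam • x) :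
    IsIntegral ℤ lam := by
  have hmem : AX.charpoly ∈ Polynomial.lifts (Int.castRingHom ℝ) := by
    rw [Polynomial.lifts_iff_coeff_lifts]
    intro i
    obtain ⟨z, hz⟩ := hAXcharpoly i
    exact ⟨z, hz.symm⟩
  obtain ⟨q, hq, _, hqm⟩ :=
    Polynomial.lifts_and_degree_eq_and_monic hmem (Matrix.charpoly_monic AX)
  have hdet : (Matrix.scalar (Fin m) lam - AX).det = 0 := by
    rw [← Matrix.exists_mulVec_eq_zero_iff]
    refine ⟨x, hx, ?_⟩
    have h1 : (Matrix.scalar (Fin m) lam) *ᵥ x = lam • x := by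
      ext i
      simp [Matrix.mulVec, Matrix.scalar, Matrix.diagonal, dotProduct]
    rw [Matrix.sub_mulVec, h1, heig, sub_self]
  have heval : AX.charpoly.eval lam = 0 := by
    rw [Matrix.charpoly, eval_det, Matrix.matPolyEquiv_charmatrix]
    simpa using hdet
  refine ⟨q, hqm, ?_⟩
  rw [Polynomial.eval₂_eq_eval_map, algebraMap_int_eq, hq, heval]

theorem eig_relations {N : Type*} [Fintype N] [DecidableEq N]
    (A : Matrix N N ℝ) (hA : A.IsSymm) (τ : ℝ) (u v : N) (γ : ℂ)
    (hγ : γ = NormedSpace.exp ((Complex.I * (τ : ℂ)) • A.map (fun x : ℝ => (x : ℂ))) u v)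
    (habs : ‖γ‖ = 1) (θ : ℝ) (w : N → ℝ) (heig : A *ᵥ w = θ • w) :
    Complex.exp (Complex.I * τ * θ) * (w v : ℂ) = γ * (w u : ℂ) ∧
    Complex.exp (Complex.I * τ * θ) * (w u : ℂ) = γ * (w v : ℂ) := by
  set Mc : Matrix N N ℂ := A.map (fun x : ℝ => (x : ℂ)) with hMc
  set S : Matrix N N ℂ := (Complex.I * (τ : ℂ)) • Mc with hS
  set U : Matrix N N ℂ := NormedSpace.exp S with hU
  have hsymm : ∀ i j, A j i = A i j := fun i j => congrFun (congrFun hA i) j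
  have hMcH : Mcᴴ = Mc := by
    ext i j
    simp only [hMc, Matrix.conjTranspose_apply, Matrix.map_apply, RCLike.star_def,
      Complex.conj_ofReal]
    exact_mod_cast hsymm i j
  have hMcT : Mcᵀ = Mc := by
    ext i j
    simp only [hMc, Matrix.transpose_apply, Matrix.map_apply]
    exact_mod_cast hsymm i j
  have hSH : Sᴴ = -S := by
    rw [hS, Matrix.conjTranspose_smul, hMcH]
    have : star (Complex.I * (τ : ℂ)) = -(Complex.I * (τ : ℂ)) := by
      simp [Complex.star_def, _root_.map_mul, Complex.conj_ofReal, Complex.conj_I]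
    rw [this, neg_smul]
  have hST : Sᵀ = S := by rw [hS, Matrix.transpose_smul, hMcT]
  have hUUH : U * Uᴴ = 1 := by
    have h1 : Uᴴ = NormedSpace.exp (-S) := by
      rw [hU, ← Matrix.exp_conjTranspose, hSH]
    rw [h1, hU, ← Matrix.exp_add_of_commute S (-S) ((Commute.refl S).neg_right),
      add_neg_cancel, NormedSpace.exp_zero]
  have hUHU : Uᴴ * U = 1 := mul_eq_one_comm.mp hUUH
  have hUT : Uᵀ = U := by rw [hU, ← Matrix.exp_transpose, hST]
  have hUsym : ∀ i j, U i j = U j i := fun i j => by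
    simpa using congrFun (congrFun hUT j) i
  -- column v structure
  have hcolsum : ∑ i, Complex.normSq (U i v) = 1 := by
    have h1 := congrFun (congrFun hUHU v) v
    rw [Matrix.mul_apply, Matrix.one_apply_eq] at h1
    have h2 : ∀ i, Uᴴ v i * U i v = (Complex.normSq (U i v) : ℂ) := by
      intro i
      rw [Matrix.conjTranspose_apply, RCLike.star_def, mul_comm, Complex.mul_conj]
    rw [Finset.sum_congr rfl fun i _ => h2 i] at h1
    exact_mod_cast h1
  have hγsq : Complex.normSq γ = 1 := by
    rw [← Complex.sq_norm, habs]; norm_num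
  have hcol : ∀ i, i ≠ u → U i v = 0 := by
    intro i hi
    have hsplit : Complex.normSq (U u v) +
        ∑ j ∈ Finset.univ.erase u, Complex.normSq (U j v) = 1 :=
      (Finset.add_sum_erase Finset.univ (fun j => Complex.normSq (U j v))
        (Finset.mem_univ u)).trans hcolsum
    rw [← hγ] at hsplit
    have hzero : ∑ j ∈ Finset.univ.erase u, Complex.normSq (U j v) = 0 := by
      rw [hγsq] at hsplit; linarith
    have := (Finset.sum_eq_zero_iff_of_nonneg
      (fun j _ => Complex.normSq_nonneg (U j v))).mp hzero i
      (Finset.mem_erase.mpr ⟨hi, Finset.mem_univ i⟩)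
    exact Complex.normSq_eq_zero.mp this
  -- row u structure
  have hrowsum : ∑ j, Complex.normSq (U u j) = 1 := by
    have h1 := congrFun (congrFun hUUH u) u
    rw [Matrix.mul_apply, Matrix.one_apply_eq] at h1
    have h2 : ∀ j, U u j * Uᴴ j u = (Complex.normSq (U u j) : ℂ) := by
      intro j
      rw [Matrix.conjTranspose_apply, RCLike.star_def, Complex.mul_conj]
    rw [Finset.sum_congr rfl fun j _ => h2 j] at h1
    exact_mod_cast h1
  have hrow : ∀ j, j ≠ v → U u j = 0 := by
    intro j hj
    have hsplit : Complex.normSq (U u v) +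
        ∑ i ∈ Finset.univ.erase v, Complex.normSq (U u i) = 1 :=
      (Finset.add_sum_erase Finset.univ (fun i => Complex.normSq (U u i))
        (Finset.mem_univ v)).trans hrowsum
    rw [← hγ] at hsplit
    have hzero : ∑ i ∈ Finset.univ.erase v, Complex.normSq (U u i) = 0 := by
      rw [hγsq] at hsplit; linarith
    have := (Finset.sum_eq_zero_iff_of_nonneg
      (fun i _ => Complex.normSq_nonneg (U u i))).mp hzero j
      (Finset.mem_erase.mpr ⟨hj, Finset.mem_univ j⟩)
    exact Complex.normSq_eq_zero.mp this
  -- eigenvector over ℂ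
  set wc : N → ℂ := fun i => ((w i : ℝ) : ℂ) with hwc
  have hMcwc : Mc *ᵥ wc = (θ : ℂ) • wc := by
    ext i
    have h1 := congrFun heig i
    simp only [Matrix.mulVec, dotProduct, Pi.smul_apply, smul_eq_mul] at h1 ⊢
    simp only [hMc, hwc, Matrix.map_apply]
    exact_mod_cast congrArg (fun r : ℝ => (r : ℂ)) h1
  have hSwc : S *ᵥ wc = (Complex.I * τ * θ) • wc := by
    rw [hS, Matrix.smul_mulVec, hMcwc, smul_smul]
  have hUwc : U *ᵥ wc = Complex.exp (Complex.I * τ * θ) • wc :=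
    exp_mulVec_eigen S wc _ hSwc
  constructor
  · have h1 := congrFun hUwc v
    simp only [Pi.smul_apply, smul_eq_mul] at h1
    have h2 : (U *ᵥ wc) v = γ * wc u := by
      show ∑ j, U v j * wc j = γ * wc u
      rw [hγ, Finset.sum_eq_single u]
      · rw [hUsym v u]
      · intro j _ hj
        rw [hUsym v j, hcol j hj, zero_mul]
      · intro h; exact absurd (Finset.mem_univ u) h
    rw [h1] at h2
    exact h2
  · have h1 := congrFun hUwc u
    simp only [Pi.smul_apply, smul_eq_mul] at h1
    have h2 : (U *ᵥ wc) u = γ * wc v := by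
      show ∑ j, U u j * wc j = γ * wc v
      rw [hγ, Finset.sum_eq_single v]
      · intro j _ hj
        rw [hrow j hj, zero_mul]
      · intro h; exact absurd (Finset.mem_univ v) h
    rw [h1] at h2
    exact h2

theorem stmt14 (m n : ℕ) (hm : 2 ≤ m) (hn : 1 ≤ n) (k ℓ : ℤ)
    (AX : Matrix (Fin m) (Fin m) ℝ) (AY : Matrix (Fin n) (Fin n) ℝ)
    (hAXsymm : AX.IsSymm) (hAXnonneg : ∀ i j, 0 ≤ AX i j)
    (hAXrow : ∀ i, ∑ j, AX i j = (k : ℝ))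
    (hAYsymm : AY.IsSymm) (hAYnonneg : ∀ i j, 0 ≤ AY i j)
    (hAYrow : ∀ i, ∑ j, AY i j = (ℓ : ℝ))
    (hAXcharpoly : ∀ i, ∃ z : ℤ, (Matrix.charpoly AX).coeff i = (z : ℝ))
    (hodd : Odd (k + ℓ)) :
    ∀ (u v : Fin m), u ≠ v → ∀ τ : ℝ,
      ‖transU (joinA m n AX AY) τ (Sum.inl u) (Sum.inl v)‖ ≠ 1 := by
  intro u v huv τ habs
  set A := joinA m n AX AY with hA
  have hAdef : A = Matrix.fromBlocks AX (Matrix.of fun _ _ => (1 : ℝ))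
      (Matrix.of fun _ _ => (1 : ℝ)) AY := rfl
  have hm0 : (0 : ℝ) < m := by
    have : (0:ℕ) < m := by omega
    exact_mod_cast this
  have hn0 : (0 : ℝ) < n := by
    have : (0:ℕ) < n := by omega
    exact_mod_cast this
  have hnne : (n : ℝ) ≠ 0 := hn0.ne'
  -- symmetry of the join
  have hones1 : (Matrix.of fun (_ : Fin m) (_ : Fin n) => (1 : ℝ))ᵀ
      = Matrix.of fun (_ : Fin n) (_ : Fin m) => (1 : ℝ) := by
    ext i j; simp
  have hones2 : (Matrix.of fun (_ : Fin n) (_ : Fin m) => (1 : ℝ))ᵀ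
      = Matrix.of fun (_ : Fin m) (_ : Fin n) => (1 : ℝ) := by
    ext i j; simp
  have hAsymm : A.IsSymm := by
    show Aᵀ = A
    rw [hAdef, Matrix.fromBlocks_transpose, hones1, hones2, hAXsymm.eq, hAYsymm.eq]
  -- the discriminant and the two join eigenvalues
  obtain ⟨D, hDdef⟩ : ∃ D : ℝ, D = Real.sqrt (((k:ℝ) - ℓ)^2 + 4*m*n) := ⟨_, rfl⟩
  have hΔpos : (0:ℝ) < ((k:ℝ) - ℓ)^2 + 4*m*n := by positivity
  have hD2 : D^2 = ((k:ℝ) - ℓ)^2 + 4*m*n := by rw [hDdef]; exact Real.sq_sqrt hΔpos.le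
  have hDpos : 0 < D := by rw [hDdef]; exact Real.sqrt_pos.mpr hΔpos
  obtain ⟨θp, hθp⟩ : ∃ x : ℝ, x = ((k:ℝ) + ℓ + D)/2 := ⟨_, rfl⟩
  obtain ⟨θm, hθm⟩ : ∃ x : ℝ, x = ((k:ℝ) + ℓ - D)/2 := ⟨_, rfl⟩
  -- row sums of AX, columns of AX, etc.
  have hsymmX : ∀ i j, AX j i = AX i j := fun i j => congrFun (congrFun hAXsymm.eq i) j
  have hcolX : ∀ j, ∑ i, AX i j = (k : ℝ) := by
    intro j
    have h1 : ∑ i, AX i j = ∑ i, AX j i := Finset.sum_congr rfl fun i _ => hsymmX j i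
    rw [h1]; exact hAXrow j
  -- eigenvectors of the join for θp, θm
  have hjoin_eig : ∀ θ : ℝ, θ^2 - ((k:ℝ)+ℓ)*θ + ((k:ℝ)*ℓ - m*n) = 0 →
      A *ᵥ (Sum.elim (fun _ => (1:ℝ)) (fun _ => (θ - k)/n)) =
        θ • (Sum.elim (fun _ => (1:ℝ)) (fun _ => (θ - k)/n)) := by
    intro θ hθ
    rw [hAdef, Matrix.fromBlocks_mulVec]
    funext i
    cases i with
    | inl i =>
      have e1 : (AX *ᵥ fun _ => (1:ℝ)) i = (k:ℝ) := by
        simp only [Matrix.mulVec, dotProduct, mul_one]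
        exact hAXrow i
      have e2 : ((Matrix.of fun (_ : Fin m) (_ : Fin n) => (1:ℝ)) *ᵥ
          fun _ => (θ - k)/n) i = n * ((θ - k)/n) := by
        simp [Matrix.mulVec, dotProduct, Finset.sum_const, Finset.card_univ]
      show (AX *ᵥ fun _ => (1:ℝ)) i + ((Matrix.of fun _ _ => (1:ℝ)) *ᵥ
          fun _ => (θ - k)/n) i = θ * 1
      rw [e1, e2]
      field_simp
      ring
    | inr j =>
      have e1 : ((Matrix.of fun (_ : Fin n) (_ : Fin m) => (1:ℝ)) *ᵥ
          fun _ => (1:ℝ)) j = (m : ℝ) := by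
        simp [Matrix.mulVec, dotProduct, Finset.sum_const, Finset.card_univ]
      have e2 : (AY *ᵥ fun _ => (θ - k)/n) j = (ℓ : ℝ) * ((θ - k)/n) := by
        simp only [Matrix.mulVec, dotProduct]
        rw [← Finset.sum_mul, hAYrow j]
      show ((Matrix.of fun _ _ => (1:ℝ)) *ᵥ fun _ => (1:ℝ)) j +
          (AY *ᵥ fun _ => (θ - k)/n) j = θ * ((θ - k)/n)
      rw [e1, e2]
      field_simp
      linear_combination -hθ
  have hquadp : θp^2 - ((k:ℝ)+ℓ)*θp + ((k:ℝ)*ℓ - m*n) = 0 := by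
    rw [hθp]; linear_combination hD2/4
  have hquadm : θm^2 - ((k:ℝ)+ℓ)*θm + ((k:ℝ)*ℓ - m*n) = 0 := by
    rw [hθm]; linear_combination hD2/4
  -- γ
  set γ : ℂ := transU A τ (Sum.inl u) (Sum.inl v) with hγdef
  have hγne : γ ≠ 0 := by
    intro h0
    rw [h0] at habs
    simp at habs
  -- relations for θp and θm
  have relp := eig_relations A hAsymm τ (Sum.inl u) (Sum.inl v) γ rfl habs θp _ (hjoin_eig θp hquadp)
  have relm := eig_relations A hAsymm τ (Sum.inl u) (Sum.inl v) γ rfl habs θm _ (hjoin_eig θm hquadm)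
  have hp : Complex.exp (Complex.I * τ * θp) = γ := by simpa using relp.1
  have hmm : Complex.exp (Complex.I * τ * θm) = γ := by simpa using relm.1
  -- an eigenvector of AX orthogonal to 1 separating u and v
  obtain ⟨lam, x, hxeig, hxsum, hxuv⟩ :
      ∃ (lam : ℝ) (x : Fin m → ℝ), AX *ᵥ x = lam • x ∧ (∑ i, x i) = 0 ∧ x u ≠ x v := by
    obtain ⟨μ, y, hyeig, hyz⟩ := exists_eigvec_inner_ne_zero AX hAXsymm
      (fun i => (if i = u then (1:ℝ) else 0) - (if i = v then (1:ℝ) else 0))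
      (by
        intro h0
        have := congrFun h0 u
        simp [huv] at this)
    have hyuv : y u ≠ y v := by
      intro heq
      apply hyz
      have hterm : ∀ i, y i * ((if i = u then (1:ℝ) else 0) - (if i = v then (1:ℝ) else 0))
          = y i * (if i = u then (1:ℝ) else 0) - y i * (if i = v then (1:ℝ) else 0) := by
        intro i; ring
      rw [Finset.sum_congr rfl fun i _ => hterm i, Finset.sum_sub_distrib]
      simp [Finset.sum_ite_eq', heq]
    have h1 : ∑ i, (AX *ᵥ y) i = (k:ℝ) * ∑ i, y i := by
      simp only [Matrix.mulVec, dotProduct]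
      rw [Finset.sum_comm]
      have : ∀ j, ∑ i, AX i j * y j = (k:ℝ) * y j := by
        intro j
        rw [← Finset.sum_mul, hcolX j]
      rw [Finset.sum_congr rfl fun j _ => this j, ← Finset.mul_sum]
    have h2 : ∑ i, (AX *ᵥ y) i = μ * ∑ i, y i := by
      rw [hyeig]
      simp [Finset.mul_sum]
    by_cases hs : (∑ i, y i) = 0
    · exact ⟨μ, y, hyeig, hs, hyuv⟩
    · have hμk : μ = (k:ℝ) := mul_right_cancel₀ hs (h2.symm.trans h1) |>.symm |>.symm
      obtain ⟨c, hc⟩ : ∃ c : ℝ, c = (∑ j, y j)/m := ⟨_, rfl⟩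
      refine ⟨μ, (fun i => y i - c), ?_, ?_, ?_⟩
      · have hconst : AX *ᵥ (fun _ => c) = fun _ => (k:ℝ) * c := by
          funext i
          simp only [Matrix.mulVec, dotProduct]
          rw [← Finset.sum_mul, hAXrow i]
        have hsub := Matrix.mulVec_sub AX y (fun _ => c)
        have hyc : (y - fun _ => c) = (fun i => y i - c) := rfl
        rw [hyc] at hsub
        rw [hsub, hconst, hyeig]
        funext i
        simp only [Pi.sub_apply, Pi.smul_apply, smul_eq_mul, hμk]
        ring
      · rw [Finset.sum_sub_distrib, Finset.sum_const, Finset.card_univ, Fintype.card_fin, hc, nsmul_eq_mul]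
        field_simp
        ring
      · intro heq
        apply hyuv
        have := congrArg (fun t => t + c) heq
        simpa using this
  have hxne : x ≠ 0 := by
    intro h0
    apply hxuv
    rw [h0]
    simp
  -- the join eigenvector supported on X
  have hweig : A *ᵥ (Sum.elim x (fun _ => (0:ℝ))) = lam • (Sum.elim x (fun _ => (0:ℝ))) := by
    rw [hAdef, Matrix.fromBlocks_mulVec]
    funext i
    cases i with
    | inl i =>
      show (AX *ᵥ x) i + ((Matrix.of fun _ _ => (1:ℝ)) *ᵥ (fun _ => (0:ℝ))) i = lam * x i
      have e2 : ((Matrix.of fun (_ : Fin m) (_ : Fin n) => (1:ℝ)) *ᵥ (fun _ => (0:ℝ))) i = 0 := by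
        simp [Matrix.mulVec, dotProduct]
      rw [e2, hxeig]
      simp
    | inr j =>
      show ((Matrix.of fun _ _ => (1:ℝ)) *ᵥ x) j + (AY *ᵥ (fun _ => (0:ℝ))) j = lam * 0
      have e1 : ((Matrix.of fun (_ : Fin n) (_ : Fin m) => (1:ℝ)) *ᵥ x) j = ∑ i, x i := by
        simp [Matrix.mulVec, dotProduct]
      have e2 : (AY *ᵥ (fun _ => (0:ℝ))) j = 0 := by
        simp [Matrix.mulVec, dotProduct]
      rw [e1, e2, hxsum]
      simp
  have rell := eig_relations A hAsymm τ (Sum.inl u) (Sum.inl v) γ rfl habs lam _ hweig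
  have r1 : Complex.exp (Complex.I * τ * lam) * ((x v : ℝ) : ℂ) = γ * ((x u : ℝ) : ℂ) := by
    simpa using rell.1
  have r2 : Complex.exp (Complex.I * τ * lam) * ((x u : ℝ) : ℂ) = γ * ((x v : ℝ) : ℂ) := by
    simpa using rell.2
  have hxuvC : ((x v : ℝ) : ℂ) - ((x u : ℝ) : ℂ) ≠ 0 := by
    intro h0
    apply hxuv
    have : ((x v : ℝ) : ℂ) = ((x u : ℝ) : ℂ) := by linear_combination h0
    exact (Complex.ofReal_inj.mp this).symm
  have hlamrel : Complex.exp (Complex.I * τ * lam) = -γ := by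
    have h5 : (Complex.exp (Complex.I * τ * lam) + γ) * (((x v : ℝ) : ℂ) - ((x u : ℝ) : ℂ)) = 0 := by
      linear_combination r1 - r2
    rcases mul_eq_zero.mp h5 with h6 | h6
    · linear_combination h6
    · exact absurd h6 hxuvC
  -- extract integer relations from the exponential identities
  have hpi : Real.pi ≠ 0 := Real.pi_ne_zero
  obtain ⟨a, ha⟩ := exp_I_mul_eq_one (s := τ*(θp - θm)) (by
    have hcast : Complex.I * ((τ*(θp-θm) : ℝ) : ℂ)
        = Complex.I * τ * θp - Complex.I * τ * θm := by push_cast; ring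
    rw [hcast, Complex.exp_sub, hp, hmm, div_self hγne])
  obtain ⟨p, hpeq⟩ := exp_I_mul_eq_neg_one (s := τ*(θp - lam)) (by
    have hcast : Complex.I * ((τ*(θp-lam) : ℝ) : ℂ)
        = Complex.I * τ * θp - Complex.I * τ * lam := by push_cast; ring
    rw [hcast, Complex.exp_sub, hp, hlamrel, div_neg, div_self hγne])
  obtain ⟨r, hreq⟩ := exp_I_mul_eq_neg_one (s := τ*(θm - lam)) (by
    have hcast : Complex.I * ((τ*(θm-lam) : ℝ) : ℂ)
        = Complex.I * τ * θm - Complex.I * τ * lam := by push_cast; ring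
    rw [hcast, Complex.exp_sub, hmm, hlamrel, div_neg, div_self hγne])
  have hDpm : θp - θm = D := by rw [hθp, hθm]; ring
  have hsumθ : θp + θm = (k:ℝ) + ℓ := by rw [hθp, hθm]; ring
  have haD : τ * D = 2*Real.pi*a := by rw [← hDpm]; exact ha
  have h2pine : (2*Real.pi : ℝ) ≠ 0 := by positivity
  have hapr : a = p - r := by
    have h7 : (2*Real.pi)*(a:ℝ) = (2*Real.pi)*((p:ℝ) - r) := by
      linear_combination hpeq - hreq - haD - τ*hDpm
    have h8 := mul_left_cancel₀ h2pine h7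
    exact_mod_cast h8
  have hkeyE : τ*((k:ℝ)+ℓ-2*lam) = 2*Real.pi*((p:ℝ)+r+1) := by
    linear_combination hpeq + hreq - τ*hsumθ
  have hkey : (a:ℝ)*((k:ℝ)+ℓ-2*lam) = ((p:ℝ)+r+1)*D := by
    have h8 : (2*Real.pi)*((a:ℝ)*((k:ℝ)+ℓ-2*lam)) = (2*Real.pi)*(((p:ℝ)+r+1)*D) := by
      linear_combination D*hkeyE - ((k:ℝ)+ℓ-2*lam)*haD
    exact mul_left_cancel₀ h2pine h8
  by_cases ha0 : a = 0
  · -- then p + r + 1 = 0, impossible since a = p - r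
    rw [ha0] at hkey
    simp only [Int.cast_zero, zero_mul] at hkey
    have hE0 : ((p:ℝ)+r+1) = 0 := by
      rcases mul_eq_zero.mp hkey.symm with h | h
      · exact h
      · exact absurd h hDpos.ne'
    have hE0' : p + r + 1 = 0 := by exact_mod_cast hE0
    omega
  -- main case : a ≠ 0
  have haR : (a:ℝ) ≠ 0 := Int.cast_ne_zero.mpr ha0
  have hlamint : IsIntegral ℤ lam := isIntegral_of_eig AX hAXcharpoly lam x hxne hxeig
  have i1 : IsIntegral ℤ ((k:ℝ)+ℓ) := by
    have hcast : ((k+ℓ:ℤ):ℝ) = (k:ℝ)+ℓ := by push_cast; ring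
    rw [← hcast]
    exact isIntegral_algebraMap
  have i2 : IsIntegral ℤ (2:ℝ) := by
    have hcast : ((2:ℤ):ℝ) = (2:ℝ) := by norm_num
    rw [← hcast]
    exact isIntegral_algebraMap
  have hint_t : IsIntegral ℤ ((k:ℝ)+ℓ-2*lam) := i1.sub (i2.mul hlamint)
  have hsq : ((a:ℝ))^2 * ((k:ℝ)+ℓ-2*lam)^2
      = ((p:ℝ)+r+1)^2 * (((k:ℝ)-ℓ)^2 + 4*m*n) := by
    linear_combination ((a:ℝ)*((k:ℝ)+ℓ-2*lam) + ((p:ℝ)+r+1)*D)*hkey + ((p:ℝ)+r+1)^2*hD2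
  obtain ⟨q0, hq0def⟩ : ∃ q0 : ℚ,
      q0 = (((p+r+1)^2 * ((k-ℓ)^2 + 4*m*n) : ℤ) : ℚ) / ((a:ℚ))^2 := ⟨_, rfl⟩
  have hq0R : (q0 : ℝ) = ((k:ℝ)+ℓ-2*lam)^2 := by
    rw [hq0def]
    push_cast
    rw [div_eq_iff (by positivity : ((a:ℝ))^2 ≠ 0)]
    linear_combination -hsq
  have hq0int : IsIntegral ℤ q0 := by
    have ht2 : IsIntegral ℤ (((k:ℝ)+ℓ-2*lam)^2) := hint_t.pow 2
    have hmap : algebraMap ℚ ℝ q0 = ((k:ℝ)+ℓ-2*lam)^2 := by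
      rw [eq_ratCast (algebraMap ℚ ℝ) q0, hq0R]
    exact (isIntegral_algebraMap_iff (algebraMap ℚ ℝ).injective).mp (hmap ▸ ht2)
  obtain ⟨N, hN⟩ := IsIntegrallyClosed.isIntegral_iff.mp hq0int
  have hNq : ((N:ℤ):ℚ) = q0 := by rw [← hN]; rfl
  have hNt : ((N:ℤ):ℝ) = ((k:ℝ)+ℓ-2*lam)^2 := by
    have := congrArg (fun q : ℚ => (q:ℝ)) hNq
    rw [← hq0R]
    exact_mod_cast this
  have hNa : N * a^2 = (p+r+1)^2 * ((k-ℓ)^2 + 4*m*n) := by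
    have hreal : ((N * a^2 : ℤ):ℝ) = (((p+r+1)^2 * ((k-ℓ)^2 + 4*m*n) : ℤ):ℝ) := by
      push_cast
      linear_combination ((a:ℝ))^2 * hNt + hsq
    exact_mod_cast hreal
  -- second integrality : lam * (k+ℓ-lam) is an integer
  have hc2int : IsIntegral ℤ (lam * ((k:ℝ)+ℓ-lam)) := hlamint.mul (i1.sub hlamint)
  obtain ⟨q1, hq1def⟩ : ∃ q1 : ℚ, q1 = (((k+ℓ)^2 - N : ℤ) : ℚ) / 4 := ⟨_, rfl⟩
  have hq1R : (q1 : ℝ) = lam * ((k:ℝ)+ℓ-lam) := by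
    rw [hq1def]
    push_cast
    rw [div_eq_iff (by norm_num : (4:ℝ) ≠ 0)]
    linear_combination -hNt
  have hq1int : IsIntegral ℤ q1 := by
    have hmap : algebraMap ℚ ℝ q1 = lam * ((k:ℝ)+ℓ-lam) := by
      rw [eq_ratCast (algebraMap ℚ ℝ) q1, hq1R]
    exact (isIntegral_algebraMap_iff (algebraMap ℚ ℝ).injective).mp (hmap ▸ hc2int)
  obtain ⟨Z, hZ⟩ := IsIntegrallyClosed.isIntegral_iff.mp hq1int
  have hZq : ((Z:ℤ):ℚ) = q1 := by rw [← hZ]; rfl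
  have h4Z : 4*Z = (k+ℓ)^2 - N := by
    have hq : ((4*Z : ℤ):ℚ) = (((k+ℓ)^2 - N : ℤ):ℚ) := by
      rw [hq1def] at hZq
      push_cast at hZq ⊢
      linear_combination 4*hZq
    exact_mod_cast hq
  -- parity contradiction
  obtain ⟨d, hd⟩ := (hodd.pow : Odd ((k+ℓ)^2))
  obtain ⟨c, hc⟩ := hodd
  have hNodd : Odd N := ⟨d - 2*Z, by linarith⟩
  have hkmlodd : Odd (k - ℓ) := ⟨c - ℓ, by linarith⟩
  obtain ⟨e2, he2⟩ := (hkmlodd.pow : Odd ((k-ℓ)^2))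
  have hΔodd : Odd ((k-ℓ)^2 + 4*(m:ℤ)*n) := ⟨e2 + 2*m*n, by linarith⟩
  rcases Int.even_or_odd a with hae | hao
  · obtain ⟨w, hw⟩ := hae
    have hEodd : Odd (p+r+1) := ⟨w + r, by omega⟩
    have hE2 : Odd ((p+r+1)^2 * ((k-ℓ)^2+4*(m:ℤ)*n)) := (hEodd.pow).mul hΔodd
    have hNa2even : Even (N * a^2) := ⟨2*N*w^2, by rw [hw]; ring⟩
    rw [hNa] at hNa2even
    exact (Int.not_odd_iff_even.mpr hNa2even) hE2
  · have hNodd2 : Odd (N * a^2) := hNodd.mul (hao.pow)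
    obtain ⟨w, hw⟩ := hao
    have hEeven : Even (p+r+1) := ⟨w + r + 1, by omega⟩
    have hE2even : Even ((p+r+1)^2 * ((k-ℓ)^2+4*(m:ℤ)*n)) :=
      (hEeven.pow_of_ne_zero two_ne_zero).mul_right _
    rw [← hNa] at hE2even
    exact (Int.not_odd_iff_even.mpr hE2even) hNodd2
end
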